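/- arXiv:1710.07507 — 5 statements merged into one kernel-verified Lean document; each statement's English description precedes it below -/
import Mathlib

section
/- Let G be a graph that is both modular and a partial cube, with at least three vertices and Θ-classes E_1, …, E_d. Then SWW_3(G) = ((3|V(G)|−6)/8)·Σ_{i=1}^{d} n_i^0 n_i^1 + ((|V(G)|−2)/4)·Σ_{i<j} ( n_{ij}^{00} n_{ij}^{11} + n_{ij}^{01} n_{ij}^{10} ) + (1/8)·Σ_{i=1}^{d} ( n_i^0 n_i^1 (n_i^1−1) + n_i^1 n_i^0 (n_i^0−1) ) + (1/4)·Σ_{i<j} ( 3 n_{ij}^{00} n_{ij}^{01} n_{ij}^{10} + 3 n_{ij}^{00} n_{ij}^{01} n_{ij}^{11} + 3 n_{ij}^{00} n_{ij}^{10} n_{ij}^{11} + 3 n_{ij}^{01} n_{ij}^{10} n_{ij}^{11} + n_{ij}^{00} n_{ij}^{11}(n_{ij}^{11}−1) + n_{ij}^{01} n_{ij}^{10}(n_{ij}^{10}−1) + n_{ij}^{10} n_{ij}^{01}(n_{ij}^{01}−1) + n_{ij}^{11} n_{ij}^{00}(n_{ij}^{00}−1) ). -/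
open Finset SimpleGraph Polynomial

/-- The Steiner distance of a vertex set `S`: the minimum number of edges of a
connected subgraph of `G` whose vertex set contains `S`. -/
noncomputable def steinerDist {V : Type*} (G : SimpleGraph V) (S : Set V) : ℕ :=
  sInf {n | ∃ H : G.Subgraph, H.Connected ∧ S ⊆ H.verts ∧ H.edgeSet.ncard = n}

/-- The Steiner `k`-Wiener index. -/
noncomputable def SW {V : Type*} [Fintype V] [DecidableEq V] (k : ℕ) (G : SimpleGraph V) : ℕ :=
  ∑ S ∈ Finset.powersetCard k (Finset.univ : Finset V), steinerDist G (S : Set V)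

/-- The Steiner `k`-hyper-Wiener index. -/
noncomputable def SWW {V : Type*} [Fintype V] [DecidableEq V] (k : ℕ) (G : SimpleGraph V) : ℝ :=
  (1/2) * ∑ S ∈ Finset.powersetCard k (Finset.univ : Finset V), (steinerDist G (S : Set V) : ℝ)
    + (1/2) * ∑ S ∈ Finset.powersetCard k (Finset.univ : Finset V), (steinerDist G (S : Set V) : ℝ) ^ 2

/-- The Steiner `k`-Hosoya polynomial `∑_{m ≥ 0} d_k(G,m) x^m`, written as
`∑_{S ⊆ V(G), |S| = k} x^{d(S)}`. -/
noncomputable def SH {V : Type*} [Fintype V] [DecidableEq V] (k : ℕ) (G : SimpleGraph V) :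
    Polynomial ℝ :=
  ∑ S ∈ Finset.powersetCard k (Finset.univ : Finset V), Polynomial.X ^ (steinerDist G (S : Set V))

/-- The Wiener index `W(G) = ∑_{{u,v} ⊆ V(G)} d(u,v)` (each unordered pair counted once). -/
noncomputable def wiener {V : Type*} [Fintype V] [DecidableEq V] (G : SimpleGraph V) : ℝ :=
  (∑ p ∈ Finset.univ.offDiag, (G.dist p.1 p.2 : ℝ)) / 2

/-- `\overline{WW}(G) = ∑_{{u,v} ⊆ V(G)} d(u,v)²`. -/
noncomputable def WWbar {V : Type*} [Fintype V] [DecidableEq V] (G : SimpleGraph V) : ℝ :=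
  (∑ p ∈ Finset.univ.offDiag, (G.dist p.1 p.2 : ℝ) ^ 2) / 2

/-- The set of ordered triples of pairwise distinct vertices. -/
def O3 (V : Type*) [Fintype V] [DecidableEq V] : Finset (V × V × V) :=
  Finset.univ.filter fun t => t.1 ≠ t.2.1 ∧ t.1 ≠ t.2.2 ∧ t.2.1 ≠ t.2.2

/-- `\widehat{WW}(G) = ∑_{(u,v,w) ∈ O₃(G)} d(u,v)·d(u,w)`. -/
noncomputable def WWhat {V : Type*} [Fintype V] [DecidableEq V] (G : SimpleGraph V) : ℝ :=
  ∑ t ∈ O3 V, (G.dist t.1 t.2.1 : ℝ) * (G.dist t.1 t.2.2 : ℝ)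

/-- `z` is a median of the triple `u, v, w`: it lies on a shortest `u,v`-path, a shortest
`u,w`-path and a shortest `v,w`-path. -/
def IsMedian {V : Type*} (G : SimpleGraph V) (u v w z : V) : Prop :=
  G.dist u z + G.dist z v = G.dist u v ∧
  G.dist u z + G.dist z w = G.dist u w ∧
  G.dist v z + G.dist z w = G.dist v w

/-- A modular graph: a connected graph in which every triple of vertices has a median. -/
def IsModular {V : Type*} (G : SimpleGraph V) : Prop :=
  G.Connected ∧ ∀ u v w : V, ∃ z : V, IsMedian G u v w z

/-- The hypercube graph `Q_n` on `Fin n → Bool`: two vertices are adjacent iff they differ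
in exactly one coordinate. -/
def hypercubeGraph (n : ℕ) : SimpleGraph (Fin n → Bool) :=
  SimpleGraph.fromRel fun x y => ∃! i, x i ≠ y i

/-- A partial cube: a connected graph isometrically embeddable into a hypercube. -/
def IsPartialCube {V : Type*} (G : SimpleGraph V) : Prop :=
  G.Connected ∧ ∃ (n : ℕ) (f : V → (Fin n → Bool)),
    ∀ u v : V, (hypercubeGraph n).dist (f u) (f v) = G.dist u v

/-- The Djoković–Winkler relation Θ on (edges viewed as) unordered pairs:
`s(u₁,v₁) Θ s(u₂,v₂)` iff `d(u₁,u₂) + d(v₁,v₂) ≠ d(u₁,v₂) + d(v₁,u₂)`. -/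
def theta {V : Type*} (G : SimpleGraph V) (e f : Sym2 V) : Prop :=
  ∃ u₁ v₁ u₂ v₂ : V, e = s(u₁, v₁) ∧ f = s(u₂, v₂) ∧
    G.dist u₁ u₂ + G.dist v₁ v₂ ≠ G.dist u₁ v₂ + G.dist v₁ u₂

/-- `E` together with the component data `U`, `U'` is the family of Θ-classes of the
partial cube `G`: each `E i` is a Θ-class of edges, the classes are pairwise distinct and
cover the edge set, and `U i`, `U' i` are (the vertex sets of) the two connected components
of `G - E i`. -/
def IsThetaClassSetup {V : Type*} (G : SimpleGraph V) (d : ℕ)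
    (E : Fin d → Set (Sym2 V)) (U U' : Fin d → Set V) : Prop :=
  (∀ i, ∃ e ∈ G.edgeSet, E i = {f | f ∈ G.edgeSet ∧ theta G f e}) ∧
  Function.Injective E ∧
  G.edgeSet = ⋃ i, E i ∧
  ∀ i, ∃ c c' : (G.deleteEdges (E i)).ConnectedComponent, c ≠ c' ∧
    U i = c.supp ∧ U' i = c'.supp ∧
    ∀ b : (G.deleteEdges (E i)).ConnectedComponent, b = c ∨ b = c'

namespace SteinerAux

variable {n : ℕ}

/-- The set of coordinates where two vertices of a hypercube differ. -/
def dset (x y : Fin n → Bool) : Finset (Fin n) := univ.filter fun c => x c ≠ y c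

lemma mem_dset {x y : Fin n → Bool} {c : Fin n} : c ∈ dset x y ↔ x c ≠ y c := by
  simp [dset]

lemma dset_comm (x y : Fin n → Bool) : dset x y = dset y x := by
  ext c; simp [mem_dset, ne_comm]

lemma dset_eq_empty {x y : Fin n → Bool} : dset x y = ∅ ↔ x = y := by
  constructor
  · intro h; funext c
    by_contra hc
    exact absurd (mem_dset.2 hc) (by simp [h])
  · intro h; subst h; ext c; simp [mem_dset]

lemma hyper_adj {x y : Fin n → Bool} :
    (hypercubeGraph n).Adj x y ↔ (dset x y).card = 1 := by
  rw [Finset.card_eq_one]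
  constructor
  · rintro ⟨hne, h | h⟩
    · obtain ⟨i, hi, hu⟩ := h
      exact ⟨i, by ext c; simp only [mem_dset, Finset.mem_singleton]
                   exact ⟨fun hc => hu c hc, fun hc => hc ▸ hi⟩⟩
    · obtain ⟨i, hi, hu⟩ := h
      exact ⟨i, by ext c; simp only [mem_dset, Finset.mem_singleton]
                   exact ⟨fun hc => hu c (Ne.symm hc), fun hc => hc ▸ (Ne.symm hi)⟩⟩
  · rintro ⟨i, hi⟩
    have hix : x i ≠ y i := mem_dset.1 (hi ▸ Finset.mem_singleton_self i)
    refine ⟨fun h => hix (by rw [h]), Or.inl ⟨i, hix, fun c hc => ?_⟩⟩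
    have := mem_dset.2 hc
    rw [hi, Finset.mem_singleton] at this
    exact this

lemma dset_triangle (x y z : Fin n → Bool) : dset x z ⊆ dset x y ∪ dset y z := by
  intro c hc
  rw [mem_dset] at hc
  simp only [Finset.mem_union, mem_dset]
  by_contra h
  push_neg at h
  exact hc (h.1.trans h.2)

lemma card_dset_le_walk {x y : Fin n → Bool} (p : (hypercubeGraph n).Walk x y) :
    (dset x y).card ≤ p.length := by
  induction p with
  | nil => simp [dset_eq_empty.2 rfl]
  | @cons u v w h p ih =>
    calc (dset u w).card ≤ (dset u v ∪ dset v w).card :=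
          Finset.card_le_card (dset_triangle u v w)
      _ ≤ (dset u v).card + (dset v w).card := Finset.card_union_le _ _
      _ ≤ 1 + p.length := by
          have := hyper_adj.1 h
          omega
      _ = (Walk.cons h p).length := by simp [Walk.length_cons]; omega

lemma exists_walk_dset : ∀ (k : ℕ) (x y : Fin n → Bool), (dset x y).card = k →
    ∃ p : (hypercubeGraph n).Walk x y, p.length = k := by
  intro k
  induction k with
  | zero =>
    intro x y h
    rw [Finset.card_eq_zero, dset_eq_empty] at h
    subst h
    exact ⟨Walk.nil, rfl⟩
  | succ k ih =>
    intro x y h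
    have hne : (dset x y).Nonempty := Finset.card_pos.1 (by omega)
    obtain ⟨γ, hγ⟩ := hne
    set x' := Function.update x γ (y γ) with hx'
    have hxγ : x γ ≠ y γ := mem_dset.1 hγ
    have hdxx' : dset x x' = {γ} := by
      ext c
      simp only [mem_dset, Finset.mem_singleton]
      constructor
      · intro hc
        by_contra hcγ
        exact hc (by rw [hx', Function.update_of_ne hcγ])
      · intro hc; subst hc
        rw [hx', Function.update_self]; exact hxγ
    have hadj : (hypercubeGraph n).Adj x x' :=
      hyper_adj.2 (by rw [hdxx']; simp)
    have hdx'y : dset x' y = (dset x y).erase γ := by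
      ext c
      simp only [mem_dset, Finset.mem_erase]
      rcases eq_or_ne c γ with rfl | hcγ
      · simp [hx', Function.update_self]
      · simp [hx', Function.update_of_ne hcγ, hcγ]
    obtain ⟨p, hp⟩ := ih x' y (by rw [hdx'y, Finset.card_erase_of_mem hγ, h]; rfl)
    exact ⟨Walk.cons hadj p, by simp [hp]⟩

lemma hyper_dist (x y : Fin n → Bool) :
    (hypercubeGraph n).dist x y = (dset x y).card := by
  obtain ⟨p, hp⟩ := exists_walk_dset (dset x y).card x y rfl
  refine le_antisymm (hp ▸ SimpleGraph.dist_le p) ?_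
  obtain ⟨q, hq⟩ := Reachable.exists_walk_length_eq_dist ⟨p⟩
  calc (dset x y).card ≤ q.length := card_dset_le_walk q
    _ = _ := hq

end SteinerAux

namespace SteinerAux

variable {n : ℕ}

lemma dset_flip {x y z : Fin n → Bool} {γ : Fin n} (h : dset x y = {γ}) :
    dset y z = if x γ = z γ then insert γ (dset x z) else (dset x z).erase γ := by
  have hγmem : x γ ≠ y γ := mem_dset.1 (h ▸ Finset.mem_singleton_self γ)
  have hoff : ∀ c, c ≠ γ → x c = y c := by
    intro c hc
    by_contra hne
    have := mem_dset.2 hne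
    rw [h, Finset.mem_singleton] at this
    exact hc this
  ext c
  rcases eq_or_ne c γ with rfl | hcγ
  · by_cases hz : x c = z c <;>
      simp only [hz, if_pos, if_neg, Finset.mem_insert, Finset.mem_erase, mem_dset] <;>
      [skip; skip] <;>
      revert hγmem hz <;> cases (x c) <;> cases (y c) <;> cases (z c) <;> simp
  · have hxy := hoff c hcγ
    by_cases hz : x γ = z γ <;>
      simp [hz, Finset.mem_insert, Finset.mem_erase, mem_dset, hcγ, ← hxy]

lemma card_dset_flip₁ {x y z : Fin n → Bool} {γ : Fin n} (h : dset x y = {γ})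
    (hz : x γ = z γ) : (dset y z).card = (dset x z).card + 1 := by
  have hγ : γ ∉ dset x z := by rw [mem_dset]; simpa using hz
  rw [dset_flip h, if_pos hz, Finset.card_insert_of_notMem hγ]

lemma card_dset_flip₂ {x y z : Fin n → Bool} {γ : Fin n} (h : dset x y = {γ})
    (hz : x γ ≠ z γ) : (dset y z).card + 1 = (dset x z).card := by
  have hγ : γ ∈ dset x z := mem_dset.2 hz
  rw [dset_flip h, if_neg hz, Finset.card_erase_add_one hγ]

variable {V : Type*} {G : SimpleGraph V} {f : V → (Fin n → Bool)}

/-- the key quadrilateral inequality in terms of dsets -/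
lemma rho_iff (hfd : ∀ u v, (dset (f u) (f v)).card = G.dist u v)
    {u₁ v₁ u₂ v₂ : V} {γ₁ γ₂ : Fin n}
    (h1 : dset (f u₁) (f v₁) = {γ₁}) (h2 : dset (f u₂) (f v₂) = {γ₂}) :
    (G.dist u₁ u₂ + G.dist v₁ v₂ ≠ G.dist u₁ v₂ + G.dist v₁ u₂) ↔ γ₁ = γ₂ := by
  rw [← hfd, ← hfd, ← hfd, ← hfd]
  have e1 : dset (f u₁) (f v₂) = dset (f v₂) (f u₁) := dset_comm _ _
  have e2 : dset (f v₁) (f v₂) = dset (f v₂) (f v₁) := dset_comm _ _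
  have e3 : dset (f u₁) (f u₂) = dset (f u₂) (f u₁) := dset_comm _ _
  have e4 : dset (f v₁) (f u₂) = dset (f u₂) (f v₁) := dset_comm _ _
  rw [e1, e2, e3, e4]
  have hmem1 : f u₁ γ₁ ≠ f v₁ γ₁ := mem_dset.1 (h1 ▸ Finset.mem_singleton_self γ₁)
  have hoff1 : ∀ c, c ≠ γ₁ → f u₁ c = f v₁ c := by
    intro c hc
    by_contra hne
    have := mem_dset.2 hne
    rw [h1, Finset.mem_singleton] at this
    exact hc this
  by_cases ha : f u₂ γ₂ = f u₁ γ₂ <;> by_cases hb : f u₂ γ₂ = f v₁ γ₂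
  · -- both agree with u₂ at γ₂, so f u₁ γ₂ = f v₁ γ₂, so γ₁ ≠ γ₂
    have hc1 := card_dset_flip₁ h2 ha
    have hc2 := card_dset_flip₁ h2 hb
    have : γ₁ ≠ γ₂ := fun hg => hmem1 (hg ▸ (ha.symm.trans hb))
    simp only [this, iff_false, ne_eq, not_not]
    omega
  · have hc1 := card_dset_flip₁ h2 ha
    have hc2 := card_dset_flip₂ h2 hb
    have : γ₁ = γ₂ := by
      by_contra hg
      exact hb (ha.trans (hoff1 γ₂ (Ne.symm hg)))
    simp only [this, iff_true]
    omega
  · have hc1 := card_dset_flip₂ h2 ha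
    have hc2 := card_dset_flip₁ h2 hb
    have : γ₁ = γ₂ := by
      by_contra hg
      exact ha ((hb.trans (hoff1 γ₂ (Ne.symm hg)).symm))
    simp only [this, iff_true]
    omega
  · have hc1 := card_dset_flip₂ h2 ha
    have hc2 := card_dset_flip₂ h2 hb
    have : γ₁ ≠ γ₂ := by
      intro hg
      subst hg
      revert ha hb hmem1
      cases (f u₂ γ₁) <;> cases (f u₁ γ₁) <;> cases (f v₁ γ₁) <;> simp
    simp only [this, iff_false, ne_eq, not_not]
    omega

end SteinerAux

namespace SteinerAux

variable {V' : Type*}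

lemma exists_adj_of_walk {H : SimpleGraph V'} (g : V' → Bool) {u v : V'}
    (p : H.Walk u v) (hne : g u ≠ g v) : ∃ a b, H.Adj a b ∧ g a ≠ g b := by
  induction p with
  | nil => exact absurd rfl hne
  | @cons u m v h p ih =>
    by_cases hum : g u = g m
    · obtain ⟨a, b, hab, hgab⟩ := ih (fun hc => hne (hum.trans hc))
      exact ⟨a, b, hab, hgab⟩
    · exact ⟨u, m, h, hum⟩

lemma walk_const {H : SimpleGraph V'} (g : V' → Bool)
    (hadj : ∀ a b, H.Adj a b → g a = g b) {u v : V'} (p : H.Walk u v) : g u = g v := by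
  induction p with
  | nil => rfl
  | cons h p ih => exact (hadj _ _ h).trans ih

lemma theta_pair {G : SimpleGraph V'} {a b c d : V'} :
    theta G s(a,b) s(c,d) ↔
      G.dist a c + G.dist b d ≠ G.dist a d + G.dist b c := by
  constructor
  · rintro ⟨u1, v1, u2, v2, he, hf, hne⟩
    rw [Sym2.eq_iff] at he hf
    rcases he with ⟨rfl, rfl⟩ | ⟨rfl, rfl⟩ <;> rcases hf with ⟨rfl, rfl⟩ | ⟨rfl, rfl⟩ <;> omega
  · intro h
    exact ⟨a, b, c, d, rfl, rfl, h⟩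

lemma cast_choose_two (m : ℕ) : ((m.choose 2 : ℕ) : ℝ) = m * (m - 1) / 2 := by
  induction m with
  | zero => simp
  | succ k ih =>
    rw [Nat.choose_succ_succ]
    push_cast [Nat.choose_one_right]
    rw [ih]
    ring

lemma cast_choose_three (m : ℕ) : ((m.choose 3 : ℕ) : ℝ) = m * (m - 1) * (m - 2) / 6 := by
  induction m with
  | zero => simp
  | succ k ih =>
    rw [Nat.choose_succ_succ]
    push_cast
    rw [cast_choose_two, ih]
    push_cast
    ring

lemma sum_sym {d : ℕ} (F : Fin d → Fin d → ℝ) (hsym : ∀ i j, F i j = F j i) :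
    ∑ i, ∑ j, F i j
      = ∑ i, F i i + 2 * ∑ i, ∑ j ∈ Finset.univ.filter (fun j => i < j), F i j := by
  have key : ∀ i : Fin d, ∑ j, F i j
      = F i i + ∑ j ∈ Finset.univ.filter (fun j => i < j), F i j
        + ∑ j ∈ Finset.univ.filter (fun j => j < i), F i j := by
    intro i
    rw [← Finset.sum_filter_add_sum_filter_not Finset.univ (fun j => i < j) (F i)]
    have : Finset.univ.filter (fun j => ¬ i < j)
        = insert i (Finset.univ.filter (fun j => j < i)) := by
      ext j
      simp only [Finset.mem_filter, Finset.mem_univ, true_and, Finset.mem_insert, not_lt]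
      constructor
      · intro h
        rcases lt_or_eq_of_le h with h | h
        · exact Or.inr h
        · exact Or.inl h
      · rintro (rfl | h)
        · exact le_refl _
        · exact le_of_lt h
    rw [this, Finset.sum_insert (by simp)]
    ring
  have swap : ∑ i, ∑ j ∈ Finset.univ.filter (fun j => j < i), F i j
      = ∑ i, ∑ j ∈ Finset.univ.filter (fun j => i < j), F i j := by
    rw [Finset.sum_comm' (s := Finset.univ) (t' := Finset.univ)
      (t := fun i => Finset.univ.filter (fun j => j < i))
      (s' := fun j => Finset.univ.filter (fun i => j < i))]
    · exact Finset.sum_congr rfl fun i _ => Finset.sum_congr rfl fun j _ => hsym j i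
    · intro i j
      simp only [Finset.mem_filter, Finset.mem_univ, true_and, and_comm]
  calc ∑ i, ∑ j, F i j
      = ∑ i, (F i i + ∑ j ∈ Finset.univ.filter (fun j => i < j), F i j
        + ∑ j ∈ Finset.univ.filter (fun j => j < i), F i j) := Finset.sum_congr rfl fun i _ => key i
    _ = _ := by rw [Finset.sum_add_distrib, Finset.sum_add_distrib, swap]; ring

lemma sum_ind_subset [DecidableEq V'] [Fintype V'] (A : Finset V') :
    ∑ s ∈ Finset.powersetCard 3 (Finset.univ : Finset V'),
      (if s ⊆ A then (1:ℝ) else 0) = ((A.card.choose 3 : ℕ) : ℝ) := by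
  rw [← Finset.sum_filter]
  simp only [Finset.sum_const, nsmul_eq_mul, mul_one]
  norm_cast
  rw [← Finset.card_powersetCard]
  congr 1
  ext s
  simp only [Finset.mem_filter, Finset.mem_powersetCard]
  refine ⟨fun h => ⟨h.2, h.1.2⟩, fun h => ⟨⟨fun x _ => Finset.mem_univ x, h.2⟩, h.1⟩⟩

end SteinerAux


open SteinerAux in
/-- Cut method for the Steiner 3-hyper-Wiener index of a graph that is both modular
and a partial cube, with at least three vertices. -/
theorem steiner_three_hyper_wiener_cut_method
    {V : Type*} [Fintype V] [DecidableEq V] (G : SimpleGraph V)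
    (hMod : IsModular G) (hPC : IsPartialCube G) (hV : 3 ≤ Fintype.card V)
    (d : ℕ) (E : Fin d → Set (Sym2 V)) (U U' : Fin d → Set V)
    (hsetup : IsThetaClassSetup G d E U U') :
    SWW 3 G = (3 * (Fintype.card V : ℝ) - 6) / 8
        * ∑ i : Fin d, ((U i).ncard : ℝ) * ((U' i).ncard : ℝ)
      + ((Fintype.card V : ℝ) - 2) / 4
        * ∑ i : Fin d, ∑ j ∈ Finset.univ.filter (fun j => i < j),
            (((U i ∩ U j).ncard : ℝ) * ((U' i ∩ U' j).ncard : ℝ)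
              + ((U i ∩ U' j).ncard : ℝ) * ((U' i ∩ U j).ncard : ℝ))
      + 1 / 8 * ∑ i : Fin d,
          (((U i).ncard : ℝ) * ((U' i).ncard : ℝ) * (((U' i).ncard : ℝ) - 1)
            + ((U' i).ncard : ℝ) * ((U i).ncard : ℝ) * (((U i).ncard : ℝ) - 1))
      + 1 / 4 * ∑ i : Fin d, ∑ j ∈ Finset.univ.filter (fun j => i < j),
          (3 * ((U i ∩ U j).ncard : ℝ) * ((U i ∩ U' j).ncard : ℝ) * ((U' i ∩ U j).ncard : ℝ)
            + 3 * ((U i ∩ U j).ncard : ℝ) * ((U i ∩ U' j).ncard : ℝ) * ((U' i ∩ U' j).ncard : ℝ)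
            + 3 * ((U i ∩ U j).ncard : ℝ) * ((U' i ∩ U j).ncard : ℝ) * ((U' i ∩ U' j).ncard : ℝ)
            + 3 * ((U i ∩ U' j).ncard : ℝ) * ((U' i ∩ U j).ncard : ℝ) * ((U' i ∩ U' j).ncard : ℝ)
            + ((U i ∩ U j).ncard : ℝ) * ((U' i ∩ U' j).ncard : ℝ) * (((U' i ∩ U' j).ncard : ℝ) - 1)
            + ((U i ∩ U' j).ncard : ℝ) * ((U' i ∩ U j).ncard : ℝ) * (((U' i ∩ U j).ncard : ℝ) - 1)
            + ((U' i ∩ U j).ncard : ℝ) * ((U i ∩ U' j).ncard : ℝ) * (((U i ∩ U' j).ncard : ℝ) - 1)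
            + ((U' i ∩ U' j).ncard : ℝ) * ((U i ∩ U j).ncard : ℝ) * (((U i ∩ U j).ncard : ℝ) - 1)) := by
  classical
  obtain ⟨hconn, n, f, hfdist⟩ := hPC
  have hfd : ∀ u v : V, (dset (f u) (f v)).card = G.dist u v := fun u v => by
    rw [← hfdist u v, hyper_dist]
  obtain ⟨hsetup1, hEinj, hcover, hsetup4⟩ := hsetup
  -- choose representative edges for each class
  have hrep : ∀ i, ∃ X Y : V, G.Adj X Y ∧ E i = {e | e ∈ G.edgeSet ∧ theta G e s(X, Y)} := by
    intro i
    obtain ⟨e, he, hEi⟩ := hsetup1 i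
    induction e using Sym2.ind with
    | _ X Y => exact ⟨X, Y, he, hEi⟩
  choose X Y hXY hEdef using hrep
  have hadj_card : ∀ {a b : V}, G.Adj a b → (dset (f a) (f b)).card = 1 := by
    intro a b hab
    rw [hfd]
    exact SimpleGraph.dist_eq_one_iff_adj.2 hab
  choose c hc using fun i => Finset.card_eq_one.1 (hadj_card (hXY i))
  -- membership in a Θ-class is determined by the coordinate
  have memE : ∀ (i) {a b : V}, G.Adj a b →
      (s(a, b) ∈ E i ↔ dset (f a) (f b) = {c i}) := by
    intro i a b hab
    obtain ⟨γ, hγ⟩ := Finset.card_eq_one.1 (hadj_card hab)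
    rw [hEdef i]
    simp only [Set.mem_setOf_eq, SimpleGraph.mem_edgeSet]
    rw [theta_pair, rho_iff hfd hγ (hc i)]
    constructor
    · rintro ⟨-, hθ⟩
      rw [hγ, hθ]
    · intro h
      refine ⟨hab, ?_⟩
      rw [hγ] at h
      exact Finset.singleton_injective h
  have hcinj : Function.Injective c := by
    intro i j hij
    apply hEinj
    ext e
    induction e using Sym2.ind with
    | _ a b =>
      constructor
      · intro he
        have haE : s(a, b) ∈ G.edgeSet := by
          rw [hEdef i] at he; exact he.1
        have hab : G.Adj a b := haE
        rw [memE j hab, ← hij, ← memE i hab]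
        exact he
      · intro he
        have haE : s(a, b) ∈ G.edgeSet := by
          rw [hEdef j] at he; exact he.1
        have hab : G.Adj a b := haE
        rw [memE i hab, hij, ← memE j hab]
        exact he
  -- every coordinate used by some pair of vertices is the coordinate of a class
  have hcov : ∀ u v γ, γ ∈ dset (f u) (f v) → ∃ i, c i = γ := by
    intro u v γ hγ
    have hne : f u γ ≠ f v γ := mem_dset.1 hγ
    obtain ⟨p⟩ := hconn.preconnected u v
    obtain ⟨a, b, hab, hgab⟩ := exists_adj_of_walk (fun x => f x γ) p hne
    have hmem : s(a, b) ∈ G.edgeSet := hab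
    rw [hcover] at hmem
    obtain ⟨i, hi⟩ := Set.mem_iUnion.1 hmem
    have hdab := (memE i hab).1 hi
    have : γ ∈ ({c i} : Finset (Fin n)) := hdab ▸ mem_dset.2 hgab
    exact ⟨i, (Finset.mem_singleton.1 this).symm⟩
  -- distance as a count over classes
  have hdist_count : ∀ u v : V, G.dist u v
      = (Finset.univ.filter (fun i : Fin d => f u (c i) ≠ f v (c i))).card := by
    intro u v
    rw [← hfd]
    symm
    apply Finset.card_bij (fun i _ => c i)
    · intro i hi
      rw [Finset.mem_filter] at hi
      exact mem_dset.2 hi.2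
    · intro i _ j _ hij
      exact hcinj hij
    · intro γ hγ
      obtain ⟨i, hi⟩ := hcov u v γ hγ
      refine ⟨i, ?_, hi⟩
      rw [Finset.mem_filter]
      refine ⟨Finset.mem_univ i, ?_⟩
      rw [hi]
      exact mem_dset.1 hγ
  -- the two sides of each class
  have hsides : ∀ i, ∃ β : Bool,
      (∀ x, x ∈ U i ↔ f x (c i) = β) ∧ (∀ x, x ∈ U' i ↔ f x (c i) ≠ β) := by
    intro i
    set G' := G.deleteEdges (E i) with hG'
    obtain ⟨cc, cc', hccne, hUc, hU'c, hall⟩ := hsetup4 i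
    have hconst : ∀ a b : V, G'.Adj a b → f a (c i) = f b (c i) := by
      intro a b hab
      rw [hG', SimpleGraph.deleteEdges_adj] at hab
      obtain ⟨habG, hnotE⟩ := hab
      by_contra hne
      apply hnotE
      rw [memE i habG]
      obtain ⟨γ, hγ⟩ := Finset.card_eq_one.1 (hadj_card habG)
      have : c i ∈ ({γ} : Finset (Fin n)) := hγ ▸ mem_dset.2 hne
      rw [Finset.mem_singleton] at this
      rw [hγ, this]
    have hcomp : ∀ a b : V, G'.connectedComponentMk a = G'.connectedComponentMk b →
        f a (c i) = f b (c i) := by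
      intro a b hab
      obtain ⟨p⟩ := (SimpleGraph.ConnectedComponent.eq).1 hab
      exact walk_const (fun x => f x (c i)) hconst p
    have hXYd : f (X i) (c i) ≠ f (Y i) (c i) :=
      mem_dset.1 ((hc i) ▸ Finset.mem_singleton_self (c i))
    have hXYcomp : G'.connectedComponentMk (X i) ≠ G'.connectedComponentMk (Y i) :=
      fun h => hXYd (hcomp _ _ h)
    -- find representatives of the two components with distinct values
    obtain ⟨u0, v0, hu0, hv0, hval⟩ : ∃ u0 v0 : V, G'.connectedComponentMk u0 = cc ∧
        G'.connectedComponentMk v0 = cc' ∧ f u0 (c i) ≠ f v0 (c i) := by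
      rcases hall (G'.connectedComponentMk (X i)) with hX | hX <;>
        rcases hall (G'.connectedComponentMk (Y i)) with hY | hY
      · exact absurd (hX.trans hY.symm) hXYcomp
      · exact ⟨X i, Y i, hX, hY, hXYd⟩
      · exact ⟨Y i, X i, hY, hX, hXYd.symm⟩
      · exact absurd (hX.trans hY.symm) hXYcomp
    refine ⟨f u0 (c i), fun x => ?_, fun x => ?_⟩
    · rw [hUc, SimpleGraph.ConnectedComponent.mem_supp_iff]
      constructor
      · intro hx
        exact hcomp _ _ (hx.trans hu0.symm)
      · intro hx
        rcases hall (G'.connectedComponentMk x) with h | h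
        · exact h
        · exact absurd ((hcomp _ _ (h.trans hv0.symm)).symm.trans hx) (Ne.symm hval)
    · rw [hU'c, SimpleGraph.ConnectedComponent.mem_supp_iff]
      constructor
      · intro hx hx'
        exact hval (hx'.symm.trans (hcomp _ _ (hx.trans hv0.symm)))
      · intro hx
        rcases hall (G'.connectedComponentMk x) with h | h
        · exact absurd (hcomp _ _ (h.trans hu0.symm)) hx
        · exact h
  choose β hβ using hsides
  -- Steiner distance of a triple
  have hSD : ∀ s ∈ Finset.powersetCard 3 (Finset.univ : Finset V),
      steinerDist G ↑s = (Finset.univ.filter (fun i : Fin d =>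
        ∃ x ∈ s, ∃ y ∈ s, f x (c i) ≠ f y (c i))).card := by
    intro s hs
    rw [Finset.mem_powersetCard] at hs
    obtain ⟨u, v, w, huv, huw, hvw, rfl⟩ := Finset.card_eq_three.1 hs.2
    set T := (Finset.univ.filter (fun i : Fin d =>
        ∃ x ∈ ({u, v, w} : Finset V), ∃ y ∈ ({u, v, w} : Finset V),
          f x (c i) ≠ f y (c i))).card with hT
    have hex : ∀ i : Fin d, (∃ x ∈ ({u, v, w} : Finset V), ∃ y ∈ ({u, v, w} : Finset V),
        f x (c i) ≠ f y (c i)) ↔ ¬ (f u (c i) = f v (c i) ∧ f v (c i) = f w (c i)) := by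
      intro i
      constructor
      · rintro ⟨x, hx, y, hy, hxy⟩ ⟨h1, h2⟩
        simp only [Finset.mem_insert, Finset.mem_singleton] at hx hy
        rcases hx with rfl | rfl | rfl <;> rcases hy with rfl | rfl | rfl <;>
          first
            | exact hxy rfl
            | exact hxy h1
            | exact hxy h2
            | exact hxy (h1.trans h2)
            | exact hxy h1.symm
            | exact hxy h2.symm
            | exact hxy (h1.trans h2).symm
      · intro h
        by_cases h1 : f u (c i) = f v (c i)
        · exact ⟨v, by simp, w, by simp, fun h2 => h ⟨h1, h2⟩⟩
        · exact ⟨u, by simp, v, by simp, h1⟩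
    -- lower bound for any connected subgraph containing the triple
    have hlow : ∀ H : G.Subgraph, H.Connected → ↑({u, v, w} : Finset V) ⊆ H.verts →
        T ≤ H.edgeSet.ncard := by
      intro H hHc hHs
      have hpick : ∀ i : Fin d, ∃ a b : V,
          i ∈ Finset.univ.filter (fun i : Fin d =>
            ∃ x ∈ ({u, v, w} : Finset V), ∃ y ∈ ({u, v, w} : Finset V),
              f x (c i) ≠ f y (c i)) →
          s(a, b) ∈ H.edgeSet ∧ dset (f a) (f b) = {c i} := by
        intro i
        by_cases hi : i ∈ Finset.univ.filter (fun i : Fin d =>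
            ∃ x ∈ ({u, v, w} : Finset V), ∃ y ∈ ({u, v, w} : Finset V),
              f x (c i) ≠ f y (c i))
        · obtain ⟨x, hx, y, hy, hxy⟩ := (Finset.mem_filter.1 hi).2
          have hxV : x ∈ H.verts := hHs (Finset.mem_coe.2 hx)
          have hyV : y ∈ H.verts := hHs (Finset.mem_coe.2 hy)
          obtain ⟨p⟩ := hHc ⟨x, hxV⟩ ⟨y, hyV⟩
          obtain ⟨a, b, hab, hgab⟩ :=
            exists_adj_of_walk (fun z : H.verts => f z.1 (c i)) p hxy
          have habH : H.Adj a.1 b.1 := hab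
          have habG : G.Adj a.1 b.1 := habH.adj_sub
          refine ⟨a.1, b.1, fun _ => ⟨SimpleGraph.Subgraph.mem_edgeSet.2 habH, ?_⟩⟩
          obtain ⟨γ, hγ⟩ := Finset.card_eq_one.1 (hadj_card habG)
          have : c i ∈ ({γ} : Finset (Fin n)) := hγ ▸ mem_dset.2 hgab
          rw [Finset.mem_singleton] at this
          rw [hγ, this]
        · exact ⟨u, u, fun h => absurd h hi⟩
      choose pa pb hp using hpick
      have hfin : H.edgeSet.Finite := Set.toFinite _
      have hle : T ≤ hfin.toFinset.card := by
        apply Finset.card_le_card_of_injOn (fun i => s(pa i, pb i))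
        · intro i hi
          rw [Finset.mem_coe, Set.Finite.mem_toFinset]
          exact (hp i hi).1
        · intro i hi j hj hij
          apply hcinj
          apply Finset.singleton_injective
          have h1 := (hp i (by exact_mod_cast hi)).2
          have h2 := (hp j (by exact_mod_cast hj)).2
          rw [Sym2.eq_iff] at hij
          rcases hij with ⟨h3, h4⟩ | ⟨h3, h4⟩
          · rw [← h1, ← h2, h3, h4]
          · rw [← h1, ← h2, h3, h4, dset_comm]
      rwa [Set.ncard_eq_toFinset_card H.edgeSet hfin]
    -- upper bound: a subgraph built from a median
    obtain ⟨z, hz1, hz2, hz3⟩ := hMod.2 u v w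
    obtain ⟨p, hplen⟩ := hconn.exists_walk_length_eq_dist z u
    obtain ⟨q, hqlen⟩ := hconn.exists_walk_length_eq_dist z v
    obtain ⟨r, hrlen⟩ := hconn.exists_walk_length_eq_dist z w
    set H0 : G.Subgraph := p.toSubgraph ⊔ q.toSubgraph ⊔ r.toSubgraph with hH0
    have hH0c : H0.Connected := by
      apply SimpleGraph.Subgraph.connected_sup
      · apply SimpleGraph.Subgraph.Connected.preconnected
        apply SimpleGraph.Subgraph.connected_sup p.toSubgraph_connected.preconnected q.toSubgraph_connected.preconnected
        exact ⟨z, p.start_mem_verts_toSubgraph, q.start_mem_verts_toSubgraph⟩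
      · exact r.toSubgraph_connected.preconnected
      · refine ⟨z, ?_, r.start_mem_verts_toSubgraph⟩
        exact Set.mem_union_left _ p.start_mem_verts_toSubgraph
    have hH0s : ↑({u, v, w} : Finset V) ⊆ H0.verts := by
      intro x hx
      simp only [Finset.coe_insert, Set.mem_insert_iff, Finset.coe_singleton,
        Set.mem_singleton_iff] at hx
      rw [hH0]
      rcases hx with rfl | rfl | rfl
      · exact Set.mem_union_left _ (Set.mem_union_left _ p.end_mem_verts_toSubgraph)
      · exact Set.mem_union_left _ (Set.mem_union_right _ q.end_mem_verts_toSubgraph)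
      · exact Set.mem_union_right _ r.end_mem_verts_toSubgraph
    have hwalk_ncard : ∀ {x y : V} (t : G.Walk x y), t.toSubgraph.edgeSet.ncard ≤ t.length := by
      intro x y t
      have he : t.toSubgraph.edgeSet = ↑t.edges.toFinset := by
        rw [SimpleGraph.Walk.edgeSet_toSubgraph]
        ext e
        simp
      rw [he, Set.ncard_coe_finset]
      calc t.edges.toFinset.card ≤ t.edges.length := t.edges.toFinset_card_le
        _ = t.length := t.length_edges
    have hH0e : H0.edgeSet.ncard ≤ G.dist z u + G.dist z v + G.dist z w := by
      rw [hH0]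
      calc (p.toSubgraph ⊔ q.toSubgraph ⊔ r.toSubgraph).edgeSet.ncard
          ≤ (p.toSubgraph ⊔ q.toSubgraph).edgeSet.ncard + r.toSubgraph.edgeSet.ncard := by
            rw [SimpleGraph.Subgraph.edgeSet_sup]
            exact Set.ncard_union_le _ _
        _ ≤ p.toSubgraph.edgeSet.ncard + q.toSubgraph.edgeSet.ncard
            + r.toSubgraph.edgeSet.ncard := by
            have := Set.ncard_union_le p.toSubgraph.edgeSet q.toSubgraph.edgeSet
            rw [SimpleGraph.Subgraph.edgeSet_sup]
            omega
        _ ≤ G.dist z u + G.dist z v + G.dist z w := by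
            have h1 := hwalk_ncard p
            have h2 := hwalk_ncard q
            have h3 := hwalk_ncard r
            omega
    have hTsum : G.dist z u + G.dist z v + G.dist z w = T := by
      have h2 : 2 * (G.dist z u + G.dist z v + G.dist z w)
          = G.dist u v + G.dist u w + G.dist v w := by
        rw [SimpleGraph.dist_comm (u := u) (v := z)] at hz1 hz2
        rw [SimpleGraph.dist_comm (u := v) (v := z)] at hz3
        omega
      have h3 : G.dist u v + G.dist u w + G.dist v w = 2 * T := by
        rw [hdist_count u v, hdist_count u w, hdist_count v w, hT]
        rw [Finset.card_filter, Finset.card_filter, Finset.card_filter, Finset.card_filter,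
          ← Finset.sum_add_distrib, ← Finset.sum_add_distrib, Finset.mul_sum]
        apply Finset.sum_congr rfl
        intro i _
        rw [if_congr (hex i) rfl rfl]
        cases hu : f u (c i) <;> cases hv : f v (c i) <;> cases hw : f w (c i) <;> simp
      omega
    have hmemT : T ∈ {m | ∃ H : G.Subgraph, H.Connected ∧
        ↑({u, v, w} : Finset V) ⊆ H.verts ∧ H.edgeSet.ncard = m} :=
      ⟨H0, hH0c, hH0s, le_antisymm (le_trans hH0e (le_of_eq hTsum)) (hlow H0 hH0c hH0s)⟩
    apply le_antisymm
    · exact Nat.sInf_le hmemT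
    · apply le_csInf ⟨T, hmemT⟩
      rintro m ⟨H, h1, h2, h3⟩
      exact h3 ▸ hlow H h1 h2
  -- now the counting
  set N := Fintype.card V with hN
  set A : Fin d → Finset V := fun i => Finset.univ.filter (fun x => f x (c i) = β i) with hA
  set A' : Fin d → Finset V := fun i => Finset.univ.filter (fun x => ¬ f x (c i) = β i) with hA'
  have hUset : ∀ i, U i = ↑(A i) := by
    intro i; ext x; simp [hA, (hβ i).1 x]
  have hU'set : ∀ i, U' i = ↑(A' i) := by
    intro i; ext x; simp [hA', (hβ i).2 x]
  set P3 : Finset (Finset V) := Finset.powersetCard 3 (Finset.univ : Finset V) with hP3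
  set χ : Fin d → Finset V → ℝ :=
    fun i s => if ∃ x ∈ s, ∃ y ∈ s, f x (c i) ≠ f y (c i) then (1:ℝ) else 0 with hχ
  have hSD' : ∀ s ∈ P3, (steinerDist G ↑s : ℝ) = ∑ i, χ i s := by
    intro s hs
    rw [hSD s hs, Finset.card_filter]
    push_cast
    rfl
  have hχdec : ∀ (i) (s) (_ : s ∈ P3),
      χ i s = 1 - (if s ⊆ A i then (1:ℝ) else 0) - (if s ⊆ A' i then (1:ℝ) else 0) := by
    intro i s hs
    have hsne : s.Nonempty := by
      rw [hP3, Finset.mem_powersetCard] at hs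
      rw [← Finset.card_pos, hs.2]
      norm_num
    rw [hχ]
    by_cases h1 : s ⊆ A i
    · have hno : ¬ ∃ x ∈ s, ∃ y ∈ s, f x (c i) ≠ f y (c i) := by
        rintro ⟨x, hx, y, hy, hxy⟩
        have hxA := (Finset.mem_filter.1 (h1 hx)).2
        have hyA := (Finset.mem_filter.1 (h1 hy)).2
        exact hxy (hxA.trans hyA.symm)
      have h2 : ¬ s ⊆ A' i := by
        intro h2
        obtain ⟨x, hx⟩ := hsne
        exact (Finset.mem_filter.1 (h2 hx)).2 (Finset.mem_filter.1 (h1 hx)).2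
      simp [hno, h1, h2]
    · by_cases h2 : s ⊆ A' i
      · have hbool : ∀ b1 b2 b3 : Bool, b1 ≠ b3 → b2 ≠ b3 → b1 = b2 := by decide
        have hno : ¬ ∃ x ∈ s, ∃ y ∈ s, f x (c i) ≠ f y (c i) := by
          rintro ⟨x, hx, y, hy, hxy⟩
          exact hxy (hbool _ _ _ (Finset.mem_filter.1 (h2 hx)).2
            (Finset.mem_filter.1 (h2 hy)).2)
        simp [hno, h1, h2]
      · obtain ⟨x, hx, hxA⟩ := Finset.not_subset.1 h1
        obtain ⟨y, hy, hyA⟩ := Finset.not_subset.1 h2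
        have hxv : ¬ f x (c i) = β i := fun hc => hxA (Finset.mem_filter.2 ⟨Finset.mem_univ x, hc⟩)
        have hyv : f y (c i) = β i := by
          by_contra hc
          exact hyA (Finset.mem_filter.2 ⟨Finset.mem_univ y, hc⟩)
        have hex2 : ∃ x ∈ s, ∃ y ∈ s, f x (c i) ≠ f y (c i) :=
          ⟨x, hx, y, hy, fun hc => hxv (hc.trans hyv)⟩
        simp [hex2, h1, h2]
  have hχsq : ∀ i s, χ i s * χ i s = χ i s := by
    intro i s
    rw [hχ]
    by_cases h : ∃ x ∈ s, ∃ y ∈ s, f x (c i) ≠ f y (c i) <;> simp [h]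
  -- the partial sums
  have hLHS : SWW 3 G = ∑ i, (∑ s ∈ P3, χ i s)
      + ∑ i, ∑ j ∈ Finset.univ.filter (fun j => i < j), (∑ s ∈ P3, χ i s * χ j s) := by
    have e1 : ∑ s ∈ P3, (steinerDist G ↑s : ℝ) = ∑ i, ∑ s ∈ P3, χ i s := by
      rw [Finset.sum_congr rfl hSD', Finset.sum_comm]
    have e2 : ∑ s ∈ P3, (steinerDist G ↑s : ℝ) ^ 2 = ∑ i, ∑ j, ∑ s ∈ P3, χ i s * χ j s := by
      have h : ∀ s ∈ P3, (steinerDist G ↑s : ℝ) ^ 2 = ∑ i, ∑ j, χ i s * χ j s := by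
        intro s hs
        rw [hSD' s hs, pow_two, Finset.sum_mul_sum]
      rw [Finset.sum_congr rfl h, Finset.sum_comm]
      exact Finset.sum_congr rfl fun i _ => Finset.sum_comm
    have e3 : ∑ i, ∑ j, ∑ s ∈ P3, χ i s * χ j s
        = ∑ i, (∑ s ∈ P3, χ i s)
          + 2 * ∑ i, ∑ j ∈ Finset.univ.filter (fun j => i < j), (∑ s ∈ P3, χ i s * χ j s) := by
      rw [sum_sym (fun i j => ∑ s ∈ P3, χ i s * χ j s)
        (fun i j => Finset.sum_congr rfl fun s _ => mul_comm _ _)]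
      congr 1
      exact Finset.sum_congr rfl fun i _ => Finset.sum_congr rfl fun s _ => hχsq i s
    simp only [SWW]
    rw [← hP3, e1, e2, e3]
    ring
  have hS1 : ∀ i, (∑ s ∈ P3, χ i s)
      = ((N.choose 3 : ℕ) : ℝ) - (((A i).card.choose 3 : ℕ) : ℝ)
        - (((A' i).card.choose 3 : ℕ) : ℝ) := by
    intro i
    rw [Finset.sum_congr rfl (fun s hs => hχdec i s hs)]
    rw [Finset.sum_sub_distrib, Finset.sum_sub_distrib, sum_ind_subset, sum_ind_subset,
      Finset.sum_const, hP3, Finset.card_powersetCard, Finset.card_univ]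
    simp [hN]
  have hP2 : ∀ i j, i ≠ j → (∑ s ∈ P3, χ i s * χ j s)
      = ((N.choose 3 : ℕ) : ℝ)
        - (((A i).card.choose 3 : ℕ) : ℝ) - (((A' i).card.choose 3 : ℕ) : ℝ)
        - (((A j).card.choose 3 : ℕ) : ℝ) - (((A' j).card.choose 3 : ℕ) : ℝ)
        + (((A i ∩ A j).card.choose 3 : ℕ) : ℝ) + (((A i ∩ A' j).card.choose 3 : ℕ) : ℝ)
        + (((A' i ∩ A j).card.choose 3 : ℕ) : ℝ) + (((A' i ∩ A' j).card.choose 3 : ℕ) : ℝ) := by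
    intro i j hij
    have key : ∀ s ∈ P3, χ i s * χ j s
        = 1 - (if s ⊆ A i then (1:ℝ) else 0) - (if s ⊆ A' i then (1:ℝ) else 0)
          - (if s ⊆ A j then (1:ℝ) else 0) - (if s ⊆ A' j then (1:ℝ) else 0)
          + (if s ⊆ A i ∩ A j then (1:ℝ) else 0) + (if s ⊆ A i ∩ A' j then (1:ℝ) else 0)
          + (if s ⊆ A' i ∩ A j then (1:ℝ) else 0) + (if s ⊆ A' i ∩ A' j then (1:ℝ) else 0) := by
      intro s hs
      rw [hχdec i s hs, hχdec j s hs]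
      by_cases h1 : s ⊆ A i <;> by_cases h2 : s ⊆ A' i <;> by_cases h3 : s ⊆ A j <;>
        by_cases h4 : s ⊆ A' j <;>
        simp [Finset.subset_inter_iff, h1, h2, h3, h4] <;> ring
    rw [Finset.sum_congr rfl key]
    rw [Finset.sum_add_distrib, Finset.sum_add_distrib, Finset.sum_add_distrib,
      Finset.sum_add_distrib, Finset.sum_sub_distrib, Finset.sum_sub_distrib,
      Finset.sum_sub_distrib, Finset.sum_sub_distrib]
    rw [sum_ind_subset, sum_ind_subset, sum_ind_subset, sum_ind_subset, sum_ind_subset,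
      sum_ind_subset, sum_ind_subset, sum_ind_subset,
      Finset.sum_const, hP3, Finset.card_powersetCard, Finset.card_univ]
    simp [hN]
    try ring
  -- cardinality relations
  have hcard_part : ∀ i, (A i).card + (A' i).card = N := by
    intro i
    rw [hA, hA']
    rw [Finset.card_filter_add_card_filter_not]
    exact Finset.card_univ
  have hcard_part2 : ∀ i j, (A i ∩ A j).card + (A i ∩ A' j).card = (A i).card ∧
      (A' i ∩ A j).card + (A' i ∩ A' j).card = (A' i).card ∧
      (A i ∩ A j).card + (A' i ∩ A j).card = (A j).card := by
    intro i j
    have h1 : A i ∩ A j = (A i).filter (fun x => f x (c j) = β j) := by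
      ext x
      simp only [Finset.mem_inter, Finset.mem_filter, hA, hA', Finset.mem_univ, true_and]
      try tauto
    have h2 : A i ∩ A' j = (A i).filter (fun x => ¬ f x (c j) = β j) := by
      ext x
      simp only [Finset.mem_inter, Finset.mem_filter, hA, hA', Finset.mem_univ, true_and]
      try tauto
    have h3 : A' i ∩ A j = (A j).filter (fun x => ¬ f x (c i) = β i) := by
      ext x
      simp only [Finset.mem_inter, Finset.mem_filter, hA, hA', Finset.mem_univ, true_and]
      try tauto
    have h4 : A i ∩ A j = (A j).filter (fun x => f x (c i) = β i) := by
      ext x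
      simp only [Finset.mem_inter, Finset.mem_filter, hA, hA', Finset.mem_univ, true_and]
      try tauto
    refine ⟨?_, ?_, ?_⟩
    · rw [h1, h2, Finset.card_filter_add_card_filter_not]
    · have h5 : A' i ∩ A j = (A' i).filter (fun x => f x (c j) = β j) := by
        ext x
        simp only [Finset.mem_inter, Finset.mem_filter, hA, hA', Finset.mem_univ, true_and]
        try tauto
      have h6 : A' i ∩ A' j = (A' i).filter (fun x => ¬ f x (c j) = β j) := by
        ext x
        simp only [Finset.mem_inter, Finset.mem_filter, hA, hA', Finset.mem_univ, true_and]
        try tauto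
      rw [h5, h6, Finset.card_filter_add_card_filter_not]
    · rw [h4, h3, Finset.card_filter_add_card_filter_not]
  -- final algebra
  rw [hLHS]
  simp only [hUset, hU'set, ← Finset.coe_inter, Set.ncard_coe_finset]
  have hmain1 : ∑ i, (∑ s ∈ P3, χ i s)
      = (3 * (N : ℝ) - 6) / 8 * ∑ i, ((A i).card : ℝ) * ((A' i).card : ℝ)
        + 1 / 8 * ∑ i, (((A i).card : ℝ) * ((A' i).card : ℝ) * (((A' i).card : ℝ) - 1)
            + ((A' i).card : ℝ) * ((A i).card : ℝ) * (((A i).card : ℝ) - 1)) := by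
    rw [Finset.mul_sum, Finset.mul_sum, ← Finset.sum_add_distrib]
    apply Finset.sum_congr rfl
    intro i _
    rw [hS1 i]
    simp only [cast_choose_three]
    have hNi : (N : ℝ) = ((A i).card : ℝ) + ((A' i).card : ℝ) := by
      exact_mod_cast (hcard_part i).symm
    rw [hNi]
    ring
  have hmain2 : ∑ i, ∑ j ∈ Finset.univ.filter (fun j => i < j), (∑ s ∈ P3, χ i s * χ j s)
      = ((N : ℝ) - 2) / 4 * ∑ i, ∑ j ∈ Finset.univ.filter (fun j => i < j),
            (((A i ∩ A j).card : ℝ) * ((A' i ∩ A' j).card : ℝ)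
              + ((A i ∩ A' j).card : ℝ) * ((A' i ∩ A j).card : ℝ))
        + 1 / 4 * ∑ i, ∑ j ∈ Finset.univ.filter (fun j => i < j),
          (3 * ((A i ∩ A j).card : ℝ) * ((A i ∩ A' j).card : ℝ) * ((A' i ∩ A j).card : ℝ)
            + 3 * ((A i ∩ A j).card : ℝ) * ((A i ∩ A' j).card : ℝ) * ((A' i ∩ A' j).card : ℝ)
            + 3 * ((A i ∩ A j).card : ℝ) * ((A' i ∩ A j).card : ℝ) * ((A' i ∩ A' j).card : ℝ)
            + 3 * ((A i ∩ A' j).card : ℝ) * ((A' i ∩ A j).card : ℝ) * ((A' i ∩ A' j).card : ℝ)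
            + ((A i ∩ A j).card : ℝ) * ((A' i ∩ A' j).card : ℝ) * (((A' i ∩ A' j).card : ℝ) - 1)
            + ((A i ∩ A' j).card : ℝ) * ((A' i ∩ A j).card : ℝ) * (((A' i ∩ A j).card : ℝ) - 1)
            + ((A' i ∩ A j).card : ℝ) * ((A i ∩ A' j).card : ℝ) * (((A i ∩ A' j).card : ℝ) - 1)
            + ((A' i ∩ A' j).card : ℝ) * ((A i ∩ A j).card : ℝ) * (((A i ∩ A j).card : ℝ) - 1)) := by
    rw [Finset.mul_sum, Finset.mul_sum, ← Finset.sum_add_distrib]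
    apply Finset.sum_congr rfl
    intro i _
    rw [Finset.mul_sum, Finset.mul_sum, ← Finset.sum_add_distrib]
    apply Finset.sum_congr rfl
    intro j hj
    have hij : i ≠ j := ne_of_lt (Finset.mem_filter.1 hj).2
    obtain ⟨e1, e2, e3⟩ := hcard_part2 i j
    have e4 := hcard_part i
    have e5 := hcard_part j
    have e6 : (A' j).card = (A i ∩ A' j).card + (A' i ∩ A' j).card := by omega
    rw [hP2 i j hij]
    simp only [cast_choose_three]
    have hc1 : ((A i).card : ℝ) = ((A i ∩ A j).card : ℝ) + ((A i ∩ A' j).card : ℝ) := by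
      exact_mod_cast e1.symm
    have hc2 : ((A' i).card : ℝ) = ((A' i ∩ A j).card : ℝ) + ((A' i ∩ A' j).card : ℝ) := by
      exact_mod_cast e2.symm
    have hc3 : ((A j).card : ℝ) = ((A i ∩ A j).card : ℝ) + ((A' i ∩ A j).card : ℝ) := by
      exact_mod_cast e3.symm
    have hc4 : ((A' j).card : ℝ) = ((A i ∩ A' j).card : ℝ) + ((A' i ∩ A' j).card : ℝ) := by
      exact_mod_cast e6
    have hc5 : (N : ℝ) = ((A i ∩ A j).card : ℝ) + ((A i ∩ A' j).card : ℝ)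
        + ((A' i ∩ A j).card : ℝ) + ((A' i ∩ A' j).card : ℝ) := by
      have : N = (A i ∩ A j).card + (A i ∩ A' j).card
          + ((A' i ∩ A j).card + (A' i ∩ A' j).card) := by omega
      rw [this]
      push_cast
      ring
    rw [hc1, hc2, hc3, hc4, hc5]
    ring
  rw [hmain1, hmain2]
  ring
end

section
/- Let P_n be the path on n vertices and let k ≥ 2 be an integer with k ≤ n. Then for every j ∈ {k−1, …, n−1}, the number of subsets S ⊆ V(P_n) with |S| = k and Steiner distance d(S) = j equals (n−j)·C(j−1, k−2), where C(·,·) denotes binomial coefficients. -/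
open Finset SimpleGraph Polynomial

lemma crosses {n : ℕ} {H : (SimpleGraph.pathGraph n).Subgraph} {u v : H.verts}
    (p : H.coe.Walk u v) {m : ℕ} (hm : (u : Fin n).val ≤ m) (hmb : m < (v : Fin n).val) :
    ∃ x y : Fin n, (x : ℕ) = m ∧ (y : ℕ) = m + 1 ∧ H.Adj x y := by
  induction p with
  | nil => omega
  | @cons u c w h q ih =>
    have hadj : H.Adj u c := h
    have hG : (SimpleGraph.pathGraph n).Adj (u : Fin n) (c : Fin n) := H.adj_sub hadj
    rw [SimpleGraph.pathGraph_adj] at hG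
    by_cases hc : (c : Fin n).val ≤ m
    · exact ih hc hmb
    · exact ⟨u, c, by omega, by omega, hadj⟩

@[reducible] def intervalSub (n : ℕ) (a b : Fin n) : (SimpleGraph.pathGraph n).Subgraph where
  verts := {x | a.val ≤ x.val ∧ x.val ≤ b.val}
  Adj x y := (SimpleGraph.pathGraph n).Adj x y ∧ a.val ≤ x.val ∧ x.val ≤ b.val ∧
    a.val ≤ y.val ∧ y.val ≤ b.val
  adj_sub h := h.1
  edge_vert h := ⟨h.2.1, h.2.2.1⟩
  symm := ⟨fun x y h => ⟨h.1.symm, h.2.2.2.1, h.2.2.2.2, h.2.1, h.2.2.1⟩⟩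

def crossEdges (n : ℕ) (a b : Fin n) : Finset (Sym2 (Fin n)) :=
  (Finset.Ico a.val b.val).attach.image
    (fun m => s((⟨m.1, by have := (Finset.mem_Ico.mp m.2).2; omega⟩ : Fin n),
                (⟨m.1 + 1, by have := (Finset.mem_Ico.mp m.2).2; omega⟩ : Fin n)))

lemma crossEdges_card (n : ℕ) (a b : Fin n) : (crossEdges n a b).card = b.val - a.val := by
  rw [crossEdges, Finset.card_image_of_injective _ ?_, Finset.card_attach, Nat.card_Ico]
  intro x y h
  rw [Sym2.eq_iff] at h
  rcases h with ⟨h1, h2⟩ | ⟨h1, h2⟩ <;>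
    [exact Subtype.ext (congrArg Fin.val h1);
     (exfalso
      have e1 : (x : ℕ) = (y : ℕ) + 1 := congrArg Fin.val h1
      have e2 : (x : ℕ) + 1 = (y : ℕ) := congrArg Fin.val h2
      omega)]

lemma crossEdges_eq (n : ℕ) (a b : Fin n) :
    (intervalSub n a b).edgeSet = ↑(crossEdges n a b) := by
  ext e
  induction e with
  | _ x y =>
    simp only [SimpleGraph.Subgraph.mem_edgeSet, intervalSub, Finset.coe_image,
      SimpleGraph.pathGraph_adj, crossEdges, Set.mem_image, Finset.mem_coe,
      Finset.mem_image, Finset.mem_attach, true_and, Subtype.exists, Finset.mem_Ico]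
    constructor
    · rintro ⟨h1 | h1, h2⟩
      · exact ⟨x.val, ⟨h2.1, by omega⟩, by
          rw [Sym2.eq_iff]; left
          exact ⟨by apply Fin.ext; simp, by apply Fin.ext; simp [h1]⟩⟩
      · exact ⟨y.val, ⟨h2.2.2.1, by omega⟩, by
          rw [Sym2.eq_iff]; right
          exact ⟨Fin.ext rfl, Fin.ext h1⟩⟩
    · rintro ⟨m, hm, he⟩
      rw [Sym2.eq_iff] at he
      rcases he with ⟨h1, h2⟩ | ⟨h1, h2⟩ <;>
        [(have hx : x.val = m := by rw [← h1];
          have hy : y.val = m + 1 := by rw [← h2]);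
         (have hx : x.val = m + 1 := by rw [← h2];
          have hy : y.val = m := by rw [← h1])] <;>
        exact ⟨by omega, by omega, by omega, by omega, by omega⟩

lemma intervalSub_connected {n : ℕ} (a b : Fin n) (hab : a.val ≤ b.val) :
    (intervalSub n a b).Connected := by
  rw [SimpleGraph.Subgraph.connected_iff, SimpleGraph.Subgraph.preconnected_iff]
  have ha : a ∈ (intervalSub n a b).verts := ⟨le_refl _, hab⟩
  constructor
  · intro x y
    have key : ∀ d (x : Fin n) (hx : x ∈ (intervalSub n a b).verts), x.val = a.val + d →
        (intervalSub n a b).coe.Reachable ⟨a, ha⟩ ⟨x, hx⟩ := by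
      intro d
      induction d with
      | zero =>
        intro x hx hval
        have : x = a := Fin.ext (by omega)
        subst this
        exact SimpleGraph.Reachable.refl _
      | succ d ih =>
        intro x hx hval
        have hx2 : x.val - 1 < n := by omega
        set y : Fin n := ⟨x.val - 1, hx2⟩ with hy
        have h1 : a.val ≤ x.val := hx.1
        have h2 : x.val ≤ b.val := hx.2
        have hyv : y ∈ (intervalSub n a b).verts :=
          ⟨show a.val ≤ x.val - 1 by omega, show x.val - 1 ≤ b.val by omega⟩
        have hr := ih y hyv (by simp [hy]; omega)
        refine hr.trans (SimpleGraph.Adj.reachable ?_)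
        show (intervalSub n a b).Adj y x
        refine ⟨?_, hyv.1, hyv.2, hx.1, hx.2⟩
        rw [SimpleGraph.pathGraph_adj]
        left; simp [hy]; omega
    have hx := x.2
    have hy := y.2
    have r1 := key (x.1.val - a.val) x.1 x.2 (by have := hx.1; omega)
    have r2 := key (y.1.val - a.val) y.1 y.2 (by have := hy.1; omega)
    exact (r1.symm.trans r2)
  · exact ⟨a, ha⟩

lemma steinerDist_path (n : ℕ) (S : Finset (Fin n)) (hS : S.Nonempty) :
    steinerDist (SimpleGraph.pathGraph n) (S : Set (Fin n))
      = (S.max' hS).val - (S.min' hS).val := by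
  set a := S.min' hS
  set b := S.max' hS
  have hab : a.val ≤ b.val := S.min'_le _ (S.max'_mem hS)
  have hmem : b.val - a.val ∈
      {m | ∃ H : (SimpleGraph.pathGraph n).Subgraph, H.Connected ∧
        (S : Set (Fin n)) ⊆ H.verts ∧ H.edgeSet.ncard = m} := by
    refine ⟨intervalSub n a b, intervalSub_connected a b hab, ?_, ?_⟩
    · intro x hx
      exact ⟨S.min'_le x hx, S.le_max' x hx⟩
    · rw [crossEdges_eq, Set.ncard_coe_finset, crossEdges_card]
  refine le_antisymm (Nat.sInf_le hmem) (le_csInf ⟨_, hmem⟩ ?_)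
  rintro m ⟨H, hconn, hsub, hcard⟩
  have haH : a ∈ H.verts := hsub (S.min'_mem hS)
  have hbH : b ∈ H.verts := hsub (S.max'_mem hS)
  obtain ⟨p⟩ := hconn.preconnected ⟨a, haH⟩ ⟨b, hbH⟩
  have hsubE : ↑(crossEdges n a b) ⊆ H.edgeSet := by
    intro e he
    simp only [crossEdges, Finset.coe_image, Set.mem_image, Finset.mem_coe,
      Finset.mem_attach, true_and, Subtype.exists, Finset.mem_Ico] at he
    obtain ⟨m, hm, rfl⟩ := he
    obtain ⟨x, y, hx, hy, hadj⟩ := crosses p hm.1 hm.2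
    have he : s(x, y) = s((⟨m, by omega⟩ : Fin n), (⟨m + 1, by omega⟩ : Fin n)) := by
      rw [Sym2.eq_iff]; left; exact ⟨Fin.ext hx, Fin.ext hy⟩
    have hadj' : s(x, y) ∈ H.edgeSet := SimpleGraph.Subgraph.mem_edgeSet.mpr hadj
    exact he ▸ hadj'
  calc b.val - a.val = (↑(crossEdges n a b) : Set (Sym2 (Fin n))).ncard := by
        rw [Set.ncard_coe_finset, crossEdges_card]
    _ ≤ H.edgeSet.ncard := Set.ncard_le_ncard hsubE (Set.toFinite _)
    _ = m := hcard

def natSet (j a : ℕ) (T : Finset ℕ) : Finset ℕ :=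
  insert a (insert (a + j) (T.image (fun t => a + t + 1)))

lemma mem_natSet {j a : ℕ} {T : Finset ℕ} {m : ℕ} :
    m ∈ natSet j a T ↔ m = a ∨ m = a + j ∨ ∃ t ∈ T, m = a + t + 1 := by
  simp [natSet, eq_comm]

lemma natSet_card {j a : ℕ} {T : Finset ℕ} (hT : T ⊆ Finset.range (j - 1)) (hj : 1 ≤ j) :
    (natSet j a T).card = T.card + 2 := by
  have hinj : Set.InjOn (fun t => a + t + 1) T := fun x _ y _ h => by simp only at h; omega
  rw [natSet, Finset.card_insert_of_notMem, Finset.card_insert_of_notMem,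
    Finset.card_image_of_injOn hinj]
  · intro h
    simp only [Finset.mem_image] at h
    obtain ⟨t, ht, h⟩ := h
    have := Finset.mem_range.mp (hT ht)
    omega
  · intro h
    simp only [Finset.mem_insert, Finset.mem_image] at h
    rcases h with h | ⟨t, ht, h⟩ <;> [omega; omega]

lemma card_filter_val (n : ℕ) (M : Finset ℕ) (h : ∀ m ∈ M, m < n) :
    ((Finset.univ : Finset (Fin n)).filter (fun x => x.val ∈ M)).card = M.card := by
  apply Finset.card_bij (fun x _ => x.val)
  · intro x hx; exact (Finset.mem_filter.mp hx).2
  · intro x hx y hy hxy; exact Fin.ext hxy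
  · intro m hm
    exact ⟨⟨m, h m hm⟩, Finset.mem_filter.mpr ⟨Finset.mem_univ _, hm⟩, rfl⟩

noncomputable def fwdAux (n : ℕ) (S : Finset (Fin n)) : ℕ × Finset ℕ :=
  if h : S.Nonempty then
    ((S.min' h).val,
      ((S.erase (S.min' h)).erase (S.max' h)).image (fun x => x.val - (S.min' h).val - 1))
  else (0, ∅)

def bwdAux (n j : ℕ) (p : ℕ × Finset ℕ) : Finset (Fin n) :=
  (Finset.univ : Finset (Fin n)).filter (fun x => x.val ∈ natSet j p.1 p.2)


lemma natSet_lt {n j a : ℕ} {T : Finset ℕ} (ha : a + j < n) (hT : T ⊆ Finset.range (j - 1)) :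
    ∀ m ∈ natSet j a T, m < n := by
  intro m hm
  rw [mem_natSet] at hm
  rcases hm with rfl | rfl | ⟨t, ht, rfl⟩
  · omega
  · omega
  · have := Finset.mem_range.mp (hT ht); omega

lemma mem_bwdAux {n j a : ℕ} {T : Finset ℕ} {x : Fin n} :
    x ∈ bwdAux n j (a, T) ↔ x.val ∈ natSet j a T := by
  simp [bwdAux]

lemma bwdAux_card {n j a : ℕ} {T : Finset ℕ} (ha : a + j < n)
    (hT : T ⊆ Finset.range (j - 1)) (hj : 1 ≤ j) :
    (bwdAux n j (a, T)).card = T.card + 2 := by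
  have h1 : (bwdAux n j (a, T)).card = (natSet j a T).card := by
    apply Finset.card_bij (fun x _ => x.val)
    · intro x hx; exact mem_bwdAux.mp hx
    · intro x _ y _ hxy; exact Fin.ext hxy
    · intro m hm; exact ⟨⟨m, natSet_lt ha hT m hm⟩, mem_bwdAux.mpr hm, rfl⟩
  rw [h1, natSet_card hT hj]

lemma bwdAux_min' {n j a : ℕ} {T : Finset ℕ} (ha : a + j < n)
    (h : (bwdAux n j (a, T)).Nonempty) :
    (bwdAux n j (a, T)).min' h = ⟨a, by omega⟩ := by
  apply le_antisymm
  · apply Finset.min'_le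
    exact mem_bwdAux.mpr (mem_natSet.mpr (Or.inl rfl))
  · apply Finset.le_min'
    intro y hy
    rw [mem_bwdAux, mem_natSet] at hy
    rw [Fin.le_def]
    show a ≤ y.val
    rcases hy with h | h | ⟨t, ht, h⟩ <;> omega

lemma bwdAux_max' {n j a : ℕ} {T : Finset ℕ} (ha : a + j < n)
    (hT : T ⊆ Finset.range (j - 1)) (h : (bwdAux n j (a, T)).Nonempty) :
    (bwdAux n j (a, T)).max' h = ⟨a + j, ha⟩ := by
  apply le_antisymm
  · apply Finset.max'_le
    intro y hy
    rw [mem_bwdAux, mem_natSet] at hy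
    rw [Fin.le_def]
    show y.val ≤ a + j
    rcases hy with h | h | ⟨t, ht, h⟩
    · omega
    · omega
    · have := Finset.mem_range.mp (hT ht); omega
  · apply Finset.le_max'
    exact mem_bwdAux.mpr (mem_natSet.mpr (Or.inr (Or.inl rfl)))


open scoped Classical in
/-- In the path `P_n`, for `k - 1 ≤ j ≤ n - 1`, the number of `k`-subsets of vertices with
Steiner distance `j` equals `(n - j)·C(j-1, k-2)`. -/
theorem count_steiner_dist_path (n k : ℕ) (hk : 2 ≤ k) (hkn : k ≤ n)
    (j : ℕ) (hj₁ : k - 1 ≤ j) (hj₂ : j ≤ n - 1) :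
    ((Finset.powersetCard k (Finset.univ : Finset (Fin n))).filter
        (fun S => steinerDist (SimpleGraph.pathGraph n) (S : Set (Fin n)) = j)).card
      = (n - j) * Nat.choose (j - 1) (k - 2) := by
  have hn2 : 2 ≤ n := le_trans hk hkn
  have hj0 : 1 ≤ j := by omega
  have htgt : ((Finset.range (n - j)) ×ˢ
      (Finset.powersetCard (k - 2) (Finset.range (j - 1)))).card
      = (n - j) * Nat.choose (j - 1) (k - 2) := by
    rw [Finset.card_product, Finset.card_range, Finset.card_powersetCard, Finset.card_range]
  rw [← htgt]
  have hbind : ((Finset.powersetCard k (Finset.univ : Finset (Fin n))) >>=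
      fun (a : Finset (Fin n)) => (pure (↑a) : Finset (Set (Fin n))))
      = Finset.image (fun S : Finset (Fin n) => (S : Set (Fin n)))
          (Finset.powersetCard k (Finset.univ : Finset (Fin n))) :=
    Finset.sup_singleton_apply _ _
  rw [hbind, Finset.filter_image,
    Finset.card_image_of_injective _ Finset.coe_injective]
  have hdec : ∀ S : Finset (Fin n), S ∈ Finset.powersetCard k (Finset.univ : Finset (Fin n)) →
      steinerDist (SimpleGraph.pathGraph n) (S : Set (Fin n)) = j →
      S.card = k ∧ ∃ h : S.Nonempty, (S.max' h).val - (S.min' h).val = j := by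
    intro S hS hd
    rw [Finset.mem_powersetCard] at hS
    have hcard := hS.2
    have hne : S.Nonempty := by rw [← Finset.card_pos, hcard]; omega
    refine ⟨hcard, hne, ?_⟩
    rw [← steinerDist_path n S hne]
    exact hd
  have hpdec : ∀ p : ℕ × Finset ℕ, p ∈ (Finset.range (n - j)) ×ˢ
      (Finset.powersetCard (k - 2) (Finset.range (j - 1))) →
      p.1 + j < n ∧ p.2 ⊆ Finset.range (j - 1) ∧ p.2.card = k - 2 := by
    intro p hp
    rw [Finset.mem_product, Finset.mem_range, Finset.mem_powersetCard] at hp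
    exact ⟨by omega, hp.2.1, hp.2.2⟩
  refine Finset.card_bij' (fun S _ => fwdAux n S) (fun p _ => bwdAux n j p) ?_ ?_ ?_ ?_
  -- hi : fwd maps into the target
  · intro S hS
    obtain ⟨hS1, hS2⟩ := Finset.mem_filter.mp hS
    obtain ⟨hcard, hne, hdist⟩ := hdec S hS1 hS2
    set A := S.min' hne with hA
    set B := S.max' hne with hB
    have hab : A.val ≤ B.val := S.min'_le _ (S.max'_mem hne)
    have hABlt : A < B := Finset.min'_lt_max'_of_card S (by omega)
    have hBn : B.val < n := B.isLt
    have hfwd : fwdAux n S = (A.val,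
        ((S.erase A).erase B).image (fun x => x.val - A.val - 1)) := dif_pos hne
    show fwdAux n S ∈ Finset.range (n - j) ×ˢ Finset.powersetCard (k - 2) (Finset.range (j - 1))
    rw [hfwd, Finset.mem_product, Finset.mem_range, Finset.mem_powersetCard]
    refine ⟨by omega, ?_, ?_⟩
    · intro t ht
      simp only [Finset.mem_image, Finset.mem_erase] at ht
      obtain ⟨x, ⟨hxB, hxA, hxS⟩, rfl⟩ := ht
      have h1 : A.val ≤ x.val := S.min'_le _ hxS
      have h2 : x.val ≤ B.val := S.le_max' _ hxS
      have h3 : x.val ≠ A.val := fun h => hxA (Fin.ext h)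
      have h4 : x.val ≠ B.val := fun h => hxB (Fin.ext h)
      rw [Finset.mem_range]
      omega
    · have hinj : Set.InjOn (fun x : Fin n => x.val - A.val - 1) ((S.erase A).erase B) := by
        intro x hx y hy hxy
        simp only [Finset.coe_erase, Set.mem_diff, Finset.mem_coe, Set.mem_singleton_iff] at hx hy
        have h1 : A.val ≤ x.val := S.min'_le _ hx.1.1
        have h2 : A.val ≤ y.val := S.min'_le _ hy.1.1
        have h3 : x.val ≠ A.val := fun h => hx.1.2 (Fin.ext h)
        have h4 : y.val ≠ A.val := fun h => hy.1.2 (Fin.ext h)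
        simp only at hxy
        exact Fin.ext (by omega)
      have hAmem : A ∈ S := S.min'_mem hne
      have hBmem : B ∈ S.erase A := Finset.mem_erase.mpr ⟨hABlt.ne', S.max'_mem hne⟩
      rw [Finset.card_image_of_injOn hinj, Finset.card_erase_of_mem hBmem,
        Finset.card_erase_of_mem hAmem, hcard]
      omega
  -- hj : bwd maps into the filter
  · intro p hp
    obtain ⟨ha, hT, hTc⟩ := hpdec p hp
    obtain ⟨a, T⟩ := p
    have hcard : (bwdAux n j (a, T)).card = k := by
      rw [bwdAux_card ha hT hj0]; omega
    have hne : (bwdAux n j (a, T)).Nonempty := by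
      rw [← Finset.card_pos, hcard]; omega
    rw [Finset.mem_filter, Finset.mem_powersetCard]
    refine ⟨⟨Finset.subset_univ _, hcard⟩, ?_⟩
    rw [steinerDist_path n _ hne, bwdAux_min' ha hne, bwdAux_max' ha hT hne]
    simp
  -- left inverse
  · intro S hS
    obtain ⟨hS1, hS2⟩ := Finset.mem_filter.mp hS
    obtain ⟨hcard, hne, hdist⟩ := hdec S hS1 hS2
    set A := S.min' hne with hA
    set B := S.max' hne with hB
    have hab : A.val ≤ B.val := S.min'_le _ (S.max'_mem hne)
    have hBeq : B.val = A.val + j := by omega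
    have hfwd : fwdAux n S = (A.val,
        ((S.erase A).erase B).image (fun x => x.val - A.val - 1)) := dif_pos hne
    rw [hfwd]
    ext x
    rw [mem_bwdAux, mem_natSet]
    constructor
    · rintro (h | h | ⟨t, ht, hxt⟩)
      · have : x = A := Fin.ext h
        rw [this]; exact S.min'_mem hne
      · have : x = B := Fin.ext (by omega)
        rw [this]; exact S.max'_mem hne
      · simp only [Finset.mem_image, Finset.mem_erase] at ht
        obtain ⟨y, ⟨hyB, hyA, hyS⟩, rfl⟩ := ht
        have h1 : A.val ≤ y.val := S.min'_le _ hyS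
        have h3 : y.val ≠ A.val := fun h => hyA (Fin.ext h)
        have : x = y := Fin.ext (by omega)
        rw [this]; exact hyS
    · intro hx
      by_cases hxA : x = A
      · exact Or.inl (by rw [hxA])
      by_cases hxB : x = B
      · exact Or.inr (Or.inl (by rw [hxB]; omega))
      refine Or.inr (Or.inr ⟨x.val - A.val - 1, ?_, ?_⟩)
      · simp only [Finset.mem_image, Finset.mem_erase]
        exact ⟨x, ⟨hxB, hxA, hx⟩, rfl⟩
      · have h1 : A.val ≤ x.val := S.min'_le _ hx
        have h3 : x.val ≠ A.val := fun h => hxA (Fin.ext h)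
        omega
  -- right inverse
  · intro p hp
    obtain ⟨ha, hT, hTc⟩ := hpdec p hp
    obtain ⟨a, T⟩ := p
    have hcard : (bwdAux n j (a, T)).card = k := by
      rw [bwdAux_card ha hT hj0]; omega
    have hne : (bwdAux n j (a, T)).Nonempty := by
      rw [← Finset.card_pos, hcard]; omega
    have hfwd : fwdAux n (bwdAux n j (a, T)) = (((bwdAux n j (a, T)).min' hne).val,
        (((bwdAux n j (a, T)).erase ((bwdAux n j (a, T)).min' hne)).erase
          ((bwdAux n j (a, T)).max' hne)).image
          (fun x => x.val - ((bwdAux n j (a, T)).min' hne).val - 1)) := dif_pos hne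
    rw [hfwd, bwdAux_min' ha hne, bwdAux_max' ha hT hne]
    refine Prod.ext rfl ?_
    simp only
    ext t
    simp only [Finset.mem_image, Finset.mem_erase]
    constructor
    · rintro ⟨y, ⟨hyB, hyA, hyS⟩, rfl⟩
      rw [mem_bwdAux, mem_natSet] at hyS
      rcases hyS with h | h | ⟨t', ht', h⟩
      · exact absurd (Fin.ext h) hyA
      · exact absurd (Fin.ext h) hyB
      · have : y.val - a - 1 = t' := by omega
        rw [this]; exact ht'
    · intro ht
      have htj : t < j - 1 := Finset.mem_range.mp (hT ht)
      refine ⟨⟨a + t + 1, by omega⟩, ⟨?_, ?_, ?_⟩, by show a + t + 1 - a - 1 = t; omega⟩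
      · intro h
        have h2 : a + t + 1 = a + j := congrArg Fin.val h
        omega
      · intro h
        have h2 : a + t + 1 = a := congrArg Fin.val h
        omega
      · rw [mem_bwdAux, mem_natSet]
        exact Or.inr (Or.inr ⟨t, ht, rfl⟩)
end

section
/- Let P_n be the path on n vertices and let k ≥ 2 be an integer with k ≤ n. Then the Steiner k-hyper-Wiener index of P_n equals SWW_k(P_n) = Σ_{j=k−1}^{n−1} (j(j+1)(n−j)/2)·C(j−1, k−2) = C(k,2)·C(n+2, k+2), where C(·,·) denotes binomial coefficients. -/
open Finset SimpleGraph Polynomial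

lemma path_walk_exists (n : ℕ) : ∀ (d a b : ℕ) (hab : a + d = b) (hb : b < n),
    ∃ w : (SimpleGraph.pathGraph n).Walk ⟨a, by omega⟩ ⟨b, hb⟩,
      w.edges.Nodup ∧ w.length = d ∧
      (∀ x : Fin n, x ∈ w.support ↔ (a ≤ x.val ∧ x.val ≤ b)) := by
  intro d
  induction d with
  | zero =>
    intro a b hab hb
    subst hab
    exact ⟨SimpleGraph.Walk.nil, by simp, by simp, by
      intro x; simp [Fin.ext_iff]; omega⟩
  | succ d ih =>
    intro a b hab hb
    obtain ⟨w, hnd, hlen, hsupp⟩ := ih a (a + d) rfl (by omega)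
    have hadj : (SimpleGraph.pathGraph n).Adj ⟨a + d, by omega⟩ ⟨b, hb⟩ := by
      rw [pathGraph_adj]; left; simp; omega
    refine ⟨w.concat hadj, ?_, ?_, ?_⟩
    · rw [SimpleGraph.Walk.edges_concat, List.concat_eq_append, List.nodup_append]
      refine ⟨hnd, by simp, ?_⟩
      rintro e he e' he' rfl; rw [List.mem_singleton] at he'; subst he'; revert he
      intro hmem
      have := w.snd_mem_support_of_mem_edges hmem
      rw [hsupp] at this
      simp at this; omega
    · rw [SimpleGraph.Walk.length_concat, hlen]
    · intro x
      rw [SimpleGraph.Walk.support_concat, List.mem_append]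
      rw [hsupp]
      simp [Fin.ext_iff]
      omega

lemma coe_walk_length_lb {n : ℕ} (H : (pathGraph n).Subgraph) :
    ∀ {x y : H.verts} (w : H.coe.Walk x y),
      (y : Fin n).val ≤ (x : Fin n).val + w.length ∧
      (x : Fin n).val ≤ (y : Fin n).val + w.length := by
  intro x y w
  induction w with
  | nil => simp
  | cons h p ih =>
    have := h.adj_sub
    rw [pathGraph_adj] at this
    rw [SimpleGraph.Walk.length_cons]
    omega

lemma steinerDist_path_s15 {n : ℕ} (S : Finset (Fin n)) (hS : 1 < S.card)
    (hne : (S.image Fin.val).Nonempty) :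
    steinerDist (SimpleGraph.pathGraph n) (S : Set (Fin n)) =
      (S.image Fin.val).max' hne - (S.image Fin.val).min' hne := by
  set T := S.image Fin.val with hT
  set a := T.min' hne with ha
  set b := T.max' hne with hb
  have hab : a ≤ b := T.min'_le b (T.max'_mem hne)
  have hbn : b < n := by
    obtain ⟨u, _, hub⟩ := Finset.mem_image.1 (T.max'_mem hne)
    omega
  obtain ⟨w, hnd, hlen, hsupp⟩ := path_walk_exists n (b - a) a b (by omega) hbn
  have hmem : (b - a) ∈ {m | ∃ H : (pathGraph n).Subgraph,
      H.Connected ∧ (S : Set (Fin n)) ⊆ H.verts ∧ H.edgeSet.ncard = m} := by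
    refine ⟨w.toSubgraph, w.toSubgraph_connected, ?_, ?_⟩
    · intro v hv
      rw [SimpleGraph.Walk.mem_verts_toSubgraph, hsupp]
      have hv' : v.val ∈ T := Finset.mem_image_of_mem Fin.val hv
      exact ⟨T.min'_le _ hv', T.le_max' _ hv'⟩
    · rw [SimpleGraph.Walk.edgeSet_toSubgraph]
      have : w.edgeSet = ↑w.edges.toFinset := by ext e; simp
      rw [this, Set.ncard_coe_finset, List.toFinset_card_of_nodup hnd,
        SimpleGraph.Walk.length_edges, hlen]
  refine le_antisymm (Nat.sInf_le hmem) (le_csInf ⟨_, hmem⟩ ?_)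
  rintro m ⟨H, hconn, hsub, rfl⟩
  obtain ⟨u, hu, hua⟩ := Finset.mem_image.1 (T.min'_mem hne)
  obtain ⟨v, hv, hvb⟩ := Finset.mem_image.1 (T.max'_mem hne)
  have hu' : u ∈ H.verts := hsub hu
  have hv' : v ∈ H.verts := hsub hv
  obtain ⟨p⟩ := hconn.coe ⟨u, hu'⟩ ⟨v, hv'⟩
  set q : H.coe.Walk ⟨u, hu'⟩ ⟨v, hv'⟩ := ↑p.toPath with hqdef
  have hq : q.edges.Nodup := p.toPath.2.edges_nodup
  have hlb := coe_walk_length_lb H q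
  -- map edges into H.edgeSet
  have hsubset : ↑(q.edges.map (Sym2.map (Subtype.val))).toFinset
      ⊆ H.edgeSet := by
    intro e he
    simp only [List.coe_toFinset, Set.mem_setOf_eq, List.mem_map] at he
    obtain ⟨f, hf, rfl⟩ := he
    have hfe := SimpleGraph.Walk.edges_subset_edgeSet _ hf
    induction f with
    | _ x y =>
      rw [SimpleGraph.mem_edgeSet] at hfe
      rw [Sym2.map_pair_eq]
      exact SimpleGraph.Subgraph.mem_edgeSet.2 hfe
  have hcard : (q.edges.map (Sym2.map (Subtype.val))).toFinset.card
      = q.length := by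
    rw [List.toFinset_card_of_nodup (hq.map (Sym2.map.injective Subtype.val_injective)),
      List.length_map, SimpleGraph.Walk.length_edges]
  have hfin : H.edgeSet.Finite := Set.toFinite _
  have := Set.ncard_le_ncard hsubset hfin
  rw [Set.ncard_coe_finset, hcard] at this
  have h1 : ((⟨u, hu'⟩ : H.verts) : Fin n).val = u.val := rfl
  have h2 : ((⟨v, hv'⟩ : H.verts) : Fin n).val = v.val := rfl
  omega

noncomputable def fmin (T : Finset ℕ) : ℕ := if h : T.Nonempty then T.min' h else 0
noncomputable def fmax (T : Finset ℕ) : ℕ := if h : T.Nonempty then T.max' h else 0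

lemma fmin_mem {T : Finset ℕ} (h : T.Nonempty) : fmin T ∈ T := by
  rw [fmin, dif_pos h]; exact T.min'_mem h

lemma fmax_mem {T : Finset ℕ} (h : T.Nonempty) : fmax T ∈ T := by
  rw [fmax, dif_pos h]; exact T.max'_mem h

lemma fmin_le {T : Finset ℕ} {x : ℕ} (hx : x ∈ T) : fmin T ≤ x := by
  rw [fmin, dif_pos ⟨x, hx⟩]; exact T.min'_le x hx

lemma le_fmax {T : Finset ℕ} {x : ℕ} (hx : x ∈ T) : x ≤ fmax T := by
  rw [fmax, dif_pos ⟨x, hx⟩]; exact T.le_max' x hx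

lemma fmin_insert_insert (a b : ℕ) (M : Finset ℕ) (hab : a ≤ b) (hM : ∀ x ∈ M, a ≤ x) :
    fmin (insert a (insert b M)) = a := by
  have hne : (insert a (insert b M)).Nonempty := ⟨a, by simp⟩
  refine le_antisymm (fmin_le (by simp)) ?_
  rw [fmin, dif_pos hne]
  apply Finset.le_min'
  intro y hy
  simp only [Finset.mem_insert] at hy
  rcases hy with rfl | rfl | hy
  · rfl
  · exact hab
  · exact hM y hy

lemma fmax_insert_insert (a b : ℕ) (M : Finset ℕ) (hab : a ≤ b) (hM : ∀ x ∈ M, x ≤ b) :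
    fmax (insert a (insert b M)) = b := by
  have hne : (insert a (insert b M)).Nonempty := ⟨a, by simp⟩
  refine le_antisymm ?_ (le_fmax (by simp))
  rw [fmax, dif_pos hne]
  apply Finset.max'_le
  intro y hy
  simp only [Finset.mem_insert] at hy
  rcases hy with rfl | rfl | hy
  · exact hab
  · rfl
  · exact hM y hy

lemma sum_spread (n k : ℕ) (hk : 2 ≤ k) (g : ℕ → ℝ) :
    ∑ T ∈ Finset.powersetCard k (Finset.Iio n), g (fmax T - fmin T)
      = ∑ j ∈ Finset.Icc 1 (n-1), (((n - j) * Nat.choose (j-1) (k-2) : ℕ) : ℝ) * g j := by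
  classical
  set D := (Finset.Icc 1 (n-1)).sigma
      (fun j => (Finset.range (n-j)).sigma
        (fun a => Finset.powersetCard (k-2) (Finset.Ioo a (a+j)))) with hD
  have step1 : ∑ j ∈ Finset.Icc 1 (n-1), (((n - j) * Nat.choose (j-1) (k-2) : ℕ) : ℝ) * g j
      = ∑ t ∈ D, g t.1 := by
    rw [Finset.sum_sigma]
    refine Finset.sum_congr rfl fun j hj => ?_
    rw [Finset.sum_sigma]
    have : ∀ a ∈ Finset.range (n-j),
        ∑ M ∈ Finset.powersetCard (k-2) (Finset.Ioo a (a+j)), g j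
          = ((Nat.choose (j-1) (k-2) : ℕ) : ℝ) * g j := by
      intro a _
      rw [Finset.sum_const, Finset.card_powersetCard, Nat.card_Ioo]
      have : a + j - a - 1 = j - 1 := by omega
      rw [this, nsmul_eq_mul]
    rw [Finset.sum_congr rfl this, Finset.sum_const, Finset.card_range, nsmul_eq_mul]
    push_cast
    ring
  rw [step1]
  refine Finset.sum_nbij'
    (fun t => ⟨fmax t - fmin t, fmin t, (t.erase (fmin t)).erase (fmax t)⟩)
    (fun t => insert t.2.1 (insert (t.2.1 + t.1) t.2.2)) ?_ ?_ ?_ ?_ ?_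
  · -- maps into D
    intro T hT
    rw [Finset.mem_powersetCard] at hT
    obtain ⟨hsub, hcard⟩ := hT
    have hne : T.Nonempty := Finset.card_pos.1 (by omega)
    have h1 : fmin T ∈ T := fmin_mem hne
    have h2 : fmax T ∈ T := fmax_mem hne
    have hlt : fmin T < fmax T := by
      have := Finset.min'_lt_max'_of_card T (by omega : 1 < T.card)
      rwa [fmin, fmax, dif_pos hne, dif_pos hne]
    have hmaxn : fmax T < n := by have := hsub h2; simpa using this
    simp only [hD, Finset.mem_sigma, Finset.mem_Icc, Finset.mem_range,
      Finset.mem_powersetCard]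
    refine ⟨⟨by omega, by omega⟩, by omega, ?_, ?_⟩
    · intro x hx
      simp only [Finset.mem_erase] at hx
      obtain ⟨hx1, hx2, hx3⟩ := hx
      have := fmin_le hx3
      have := le_fmax hx3
      simp only [Finset.mem_Ioo]
      omega
    · have hmem : fmax T ∈ T.erase (fmin T) := Finset.mem_erase.2 ⟨by omega, h2⟩
      rw [Finset.card_erase_of_mem hmem, Finset.card_erase_of_mem h1, hcard]
      omega
  · -- maps into powersetCard
    rintro ⟨j, a, M⟩ ht
    simp only [hD, Finset.mem_sigma, Finset.mem_Icc, Finset.mem_range,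
      Finset.mem_powersetCard] at ht
    obtain ⟨⟨hj1, hj2⟩, ha, hM, hMcard⟩ := ht
    have hanotin : a ∉ insert (a+j) M := by
      simp only [Finset.mem_insert]
      push_neg
      exact ⟨by omega, fun h => by have := hM h; rw [Finset.mem_Ioo] at this; omega⟩
    have hajnotin : a + j ∉ M := fun h => by
      have := hM h; rw [Finset.mem_Ioo] at this; omega
    rw [Finset.mem_powersetCard]
    constructor
    · intro x hx
      simp only [Finset.mem_insert] at hx
      simp only [Finset.mem_Iio]
      rcases hx with rfl | rfl | hx
      · omega
      · omega
      · have := hM hx; simp at this; omega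
    · rw [Finset.card_insert_of_notMem hanotin, Finset.card_insert_of_notMem hajnotin,
        hMcard]
      omega
  · -- left inverse (on powersetCard side)
    intro T hT
    rw [Finset.mem_powersetCard] at hT
    obtain ⟨hsub, hcard⟩ := hT
    have hne : T.Nonempty := Finset.card_pos.1 (by omega)
    have h1 : fmin T ∈ T := fmin_mem hne
    have h2 : fmax T ∈ T := fmax_mem hne
    have hlt : fmin T < fmax T := by
      have := Finset.min'_lt_max'_of_card T (by omega : 1 < T.card)
      rwa [fmin, fmax, dif_pos hne, dif_pos hne]
    have heq : fmin T + (fmax T - fmin T) = fmax T := by omega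
    simp only [heq]
    ext x
    simp only [Finset.mem_insert, Finset.mem_erase]
    constructor
    · rintro (rfl | rfl | ⟨_, _, hx⟩)
      · exact h1
      · exact h2
      · exact hx
    · intro hx
      by_cases hx1 : x = fmin T
      · exact Or.inl hx1
      by_cases hx2 : x = fmax T
      · exact Or.inr (Or.inl hx2)
      · exact Or.inr (Or.inr ⟨hx2, hx1, hx⟩)
  · -- right inverse (on D side)
    rintro ⟨j, a, M⟩ ht
    simp only [hD, Finset.mem_sigma, Finset.mem_Icc, Finset.mem_range,
      Finset.mem_powersetCard] at ht
    obtain ⟨⟨hj1, hj2⟩, ha, hM, hMcard⟩ := ht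
    have hminM : ∀ x ∈ M, a ≤ x := fun x h => by have := hM h; simp at this; omega
    have hmaxM : ∀ x ∈ M, x ≤ a + j := fun x h => by have := hM h; simp at this; omega
    have hfmin : fmin (insert a (insert (a+j) M)) = a :=
      fmin_insert_insert a (a+j) M (by omega) hminM
    have hfmax : fmax (insert a (insert (a+j) M)) = a + j :=
      fmax_insert_insert a (a+j) M (by omega) hmaxM
    have herase : ((insert a (insert (a+j) M)).erase a).erase (a+j) = M := by
      ext x
      simp only [Finset.mem_erase, Finset.mem_insert]
      constructor
      · rintro ⟨hx1, hx2, rfl | rfl | hx⟩ <;> first | omega | exact hx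
      · intro hx
        have := hminM x hx
        have := hmaxM x hx
        have h3 : x ≠ a := fun h => by
          subst h; have := hM hx; rw [Finset.mem_Ioo] at this; omega
        have h4 : x ≠ a + j := fun h => by
          subst h; have := hM hx; rw [Finset.mem_Ioo] at this; omega
        exact ⟨h4, h3, Or.inr (Or.inr hx)⟩
    simp only [hfmin, hfmax, herase, Nat.add_sub_cancel_left]
  · -- summand equality
    intro T hT
    rfl

lemma base_id (m l : ℕ) :
    (m+1) * (m+2) * Nat.choose m l = (l+1) * (l+2) * Nat.choose (m+2) (l+2) := by
  have h1 := Nat.add_one_mul_choose_eq m l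
  have h2 := Nat.add_one_mul_choose_eq (m+1) (l+1)
  calc (m+1) * (m+2) * Nat.choose m l = (m+2) * ((m+1) * Nat.choose m l) := by ring
    _ = (m+2) * (Nat.choose (m+1) (l+1) * (l+1)) := by rw [h1]
    _ = ((m+1+1) * Nat.choose (m+1) (l+1)) * (l+1) := by ring
    _ = (Nat.choose (m+1+1) (l+1+1) * (l+1+1)) * (l+1) := by rw [h2]
    _ = (l+1) * (l+2) * Nat.choose (m+2) (l+2) := by ring

lemma lem1 (k : ℕ) (hk : 2 ≤ k) (m : ℕ) :
    ∑ j ∈ Finset.Icc 1 m, j * (j+1) * Nat.choose (j-1) (k-2)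
      = k * (k-1) * Nat.choose (m+2) (k+1) := by
  induction m with
  | zero =>
    rw [Finset.Icc_eq_empty (by omega), Finset.sum_empty,
      Nat.choose_eq_zero_of_lt (by omega), Nat.mul_zero]
  | succ m ih =>
    rw [Finset.sum_Icc_succ_top (by omega), ih]
    have h1 : m + 1 - 1 = m := by omega
    have h2 : (m+1) * (m+1+1) * Nat.choose m (k-2) = k * (k-1) * Nat.choose (m+2) k := by
      have := base_id m (k-2)
      have e1 : k - 2 + 1 = k - 1 := by omega
      have e2 : k - 2 + 2 = k := by omega
      rw [e1, e2] at this
      calc (m+1) * (m+1+1) * Nat.choose m (k-2)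
          = (m+1) * (m+2) * Nat.choose m (k-2) := by ring
        _ = (k-1) * k * Nat.choose (m+2) k := this
        _ = k * (k-1) * Nat.choose (m+2) k := by ring
    rw [h1, h2]
    have hp : Nat.choose (m+1+2) (k+1) = Nat.choose (m+2) k + Nat.choose (m+2) (k+1) := by
      have : m+1+2 = (m+2)+1 := by omega
      rw [this, Nat.choose_succ_succ]
    rw [hp]
    ring

lemma lem2 (k : ℕ) (hk : 2 ≤ k) (m : ℕ) :
    ∑ j ∈ Finset.Icc 1 m, (m+1-j) * (j*(j+1)) * Nat.choose (j-1) (k-2)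
      = k * (k-1) * Nat.choose (m+3) (k+2) := by
  induction m with
  | zero =>
    rw [Finset.Icc_eq_empty (by omega), Finset.sum_empty,
      Nat.choose_eq_zero_of_lt (by omega), Nat.mul_zero]
  | succ m ih =>
    have split : ∀ j ∈ Finset.Icc 1 (m+1),
        (m+1+1-j) * (j*(j+1)) * Nat.choose (j-1) (k-2)
          = (m+1-j) * (j*(j+1)) * Nat.choose (j-1) (k-2)
            + j * (j+1) * Nat.choose (j-1) (k-2) := by
      intro j hj
      rw [Finset.mem_Icc] at hj
      have : m+1+1-j = (m+1-j)+1 := by omega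
      rw [this]
      ring
    rw [Finset.sum_congr rfl split, Finset.sum_add_distrib]
    rw [Finset.sum_Icc_succ_top (by omega : 1 ≤ m+1)]
    have hz : (m+1-(m+1)) * ((m+1)*((m+1)+1)) * Nat.choose ((m+1)-1) (k-2) = 0 := by
      simp
    rw [hz, Nat.add_zero, ih, lem1 k hk (m+1)]
    have hp : Nat.choose (m+1+3) (k+2) = Nat.choose (m+3) (k+1) + Nat.choose (m+3) (k+2) := by
      have : m+1+3 = (m+3)+1 := by omega
      rw [this, Nat.choose_succ_succ]
    have h1 : m+1+2 = m+3 := by omega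
    rw [h1, hp]
    ring

lemma transfer (n k : ℕ) (hk : 2 ≤ k) (g : ℕ → ℝ) :
    ∑ S ∈ Finset.powersetCard k (Finset.univ : Finset (Fin n)),
        g (steinerDist (SimpleGraph.pathGraph n) (S : Set (Fin n)))
      = ∑ j ∈ Finset.Icc 1 (n-1), (((n - j) * Nat.choose (j-1) (k-2) : ℕ) : ℝ) * g j := by
  rw [← sum_spread n k hk g]
  have hmap : Finset.powersetCard k (Finset.Iio n)
      = (Finset.powersetCard k (Finset.univ : Finset (Fin n))).map
          (Finset.mapEmbedding Fin.valEmbedding).toEmbedding := by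
    rw [← Fin.map_valEmbedding_univ, Finset.powersetCard_map]
  rw [hmap, Finset.sum_map]
  refine Finset.sum_congr rfl fun S hS => ?_
  rw [Finset.mem_powersetCard] at hS
  have hcard : 1 < S.card := by omega
  have hSne : S.Nonempty := Finset.card_pos.1 (by omega)
  have hne : (S.image Fin.val).Nonempty := hSne.image _
  rw [RelEmbedding.coe_toEmbedding, Finset.mapEmbedding_apply, Finset.map_eq_image]
  have himg : S.image (⇑Fin.valEmbedding) = S.image Fin.val := rfl
  rw [himg, steinerDist_path_s15 S hcard hne, fmax, fmin, dif_pos hne, dif_pos hne]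

theorem main_key (n k : ℕ) (hk : 2 ≤ k) (hkn : k ≤ n) :
    SWW k (SimpleGraph.pathGraph n)
      = (1/2) * ((∑ j ∈ Finset.Icc 1 (n-1),
          (n-j) * (j*(j+1)) * Nat.choose (j-1) (k-2) : ℕ) : ℝ) := by
  have t1 := transfer n k hk (fun j => (j : ℝ))
  have t2 := transfer n k hk (fun j => (j : ℝ)^2)
  rw [SWW, t1, t2, ← mul_add, ← Finset.sum_add_distrib]
  push_cast
  rw [Finset.mul_sum, Finset.mul_sum]
  refine Finset.sum_congr rfl fun j hj => ?_
  rw [Finset.mem_Icc] at hj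
  have hjn : j ≤ n := by omega
  rw [Nat.cast_sub hjn]
  ring

/-- `SWW_k(P_n) = ∑_{j=k-1}^{n-1} (j(j+1)(n-j)/2)·C(j-1,k-2) = C(k,2)·C(n+2,k+2)`. -/
theorem steiner_hyper_wiener_path (n k : ℕ) (hk : 2 ≤ k) (hkn : k ≤ n) :
    SWW k (SimpleGraph.pathGraph n)
        = ∑ j ∈ Finset.Icc (k - 1) (n - 1),
            (j : ℝ) * ((j : ℝ) + 1) * ((n : ℝ) - (j : ℝ)) / 2 * (Nat.choose (j - 1) (k - 2) : ℝ) ∧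
    SWW k (SimpleGraph.pathGraph n)
        = (Nat.choose k 2 : ℝ) * (Nat.choose (n + 2) (k + 2) : ℝ) := by
  have hn2 : 2 ≤ n := le_trans hk hkn
  have key := main_key n k hk hkn
  have hid := lem2 k hk (n-1)
  rw [show n-1+1 = n by omega, show n-1+3 = n+2 by omega] at hid
  constructor
  · rw [key]
    rw [Finset.sum_subset (Finset.Icc_subset_Icc (by omega : 1 ≤ k-1) le_rfl)
      (by
        intro j hj hj2
        rw [Finset.mem_Icc] at hj
        rw [Finset.mem_Icc] at hj2
        rw [Nat.choose_eq_zero_of_lt (by omega)]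
        push_cast
        ring)]
    push_cast
    rw [Finset.mul_sum]
    refine Finset.sum_congr rfl fun j hj => ?_
    rw [Finset.mem_Icc] at hj
    have hjn : j ≤ n := by omega
    rw [Nat.cast_sub hjn]
    ring
  · rw [key, hid]
    have hdvd : 2 ∣ k * (k-1) := by
      have := Nat.even_mul_succ_self (k-1)
      rw [show k-1+1 = k by omega] at this
      exact (by rwa [Nat.mul_comm] : Even (k * (k-1))).two_dvd
    have hc2 : (Nat.choose k 2 : ℝ) = (k * (k-1) : ℕ) / 2 := by
      rw [Nat.choose_two_right, Nat.cast_div hdvd (by norm_num)]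
      norm_num
    rw [hc2]
    push_cast
    ring
end

section
/- Let G_{m,n} = P_m □ P_n be the grid graph with m, n ≥ 2. Then the Wiener index of G_{m,n} equals W(G_{m,n}) = (1/6)(m³n² + m²n³ − m²n − mn²). -/
open Finset SimpleGraph Polynomial

lemma walk_lip {V : Type*} (G : SimpleGraph V) (φ : V → ℕ)
    (h : ∀ u v, G.Adj u v → φ u ≤ φ v + 1) {a b : V} (p : G.Walk a b) :
    φ a ≤ φ b + p.length := by
  induction p with
  | nil => simp
  | cons hadj q ih =>
    have := h _ _ hadj
    simp only [Walk.length_cons]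
    omega

lemma pathGraph_walk (n : ℕ) : ∀ (k i : ℕ) (h : i + k < n),
    ∃ p : (SimpleGraph.pathGraph n).Walk ⟨i, by omega⟩ ⟨i + k, h⟩, p.length = k := by
  intro k
  induction k with
  | zero => intro i h; exact ⟨Walk.nil, rfl⟩
  | succ k ih =>
    intro i h
    have h' : (i + 1) + k < n := by omega
    obtain ⟨p, hp⟩ := ih (i + 1) h'
    have hadj : (SimpleGraph.pathGraph n).Adj ⟨i, by omega⟩ ⟨i + 1, by omega⟩ := by
      rw [SimpleGraph.pathGraph_adj]; left; rfl
    have he : (⟨(i + 1) + k, h'⟩ : Fin n) = ⟨i + (k + 1), h⟩ := by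
      ext; simp; omega
    exact ⟨Walk.cons hadj (p.copy rfl he), by simp [hp]⟩

lemma pathGraph_exists_walk (n : ℕ) (i j : Fin n) :
    ∃ p : (SimpleGraph.pathGraph n).Walk i j, p.length = Nat.dist i.val j.val := by
  rcases le_total i.val j.val with h | h
  · obtain ⟨p, hp⟩ := pathGraph_walk n (j.val - i.val) i.val (by omega)
    have h1 : (⟨i.val, by omega⟩ : Fin n) = i := rfl
    have h2 : (⟨i.val + (j.val - i.val), by omega⟩ : Fin n) = j := by ext; simp; omega
    refine ⟨p.copy h1 h2, ?_⟩
    simp only [Walk.length_copy, hp, Nat.dist]; omega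
  · obtain ⟨p, hp⟩ := pathGraph_walk n (i.val - j.val) j.val (by omega)
    have h1 : (⟨j.val, by omega⟩ : Fin n) = j := rfl
    have h2 : (⟨j.val + (i.val - j.val), by omega⟩ : Fin n) = i := by ext; simp; omega
    refine ⟨(p.copy h1 h2).reverse, ?_⟩
    simp only [Walk.length_reverse, Walk.length_copy, hp, Nat.dist]; omega

lemma pathGraph_dist (n : ℕ) (i j : Fin n) :
    (SimpleGraph.pathGraph n).dist i j = Nat.dist i.val j.val := by
  obtain ⟨p, hp⟩ := pathGraph_exists_walk n i j
  refine le_antisymm (hp ▸ SimpleGraph.dist_le p) ?_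
  obtain ⟨q, hq⟩ := (SimpleGraph.Reachable.exists_walk_length_eq_dist ⟨p⟩)
  have := walk_lip _ (fun v : Fin n => Nat.dist v.val j.val) ?_ q
  · simpa [hq] using this
  · intro u v huv
    rw [SimpleGraph.pathGraph_adj] at huv
    simp [Nat.dist]; omega

lemma boxProd_dist {α β : Type*} (G : SimpleGraph α) (H : SimpleGraph β)
    (hG : G.Connected) (hH : H.Connected) (a b : α × β) :
    (G □ H).dist a b = G.dist a.1 b.1 + H.dist a.2 b.2 := by
  obtain ⟨p, hp⟩ := hG.exists_walk_length_eq_dist a.1 b.1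
  obtain ⟨q, hq⟩ := hH.exists_walk_length_eq_dist a.2 b.2
  let w : (G □ H).Walk a b :=
    ((p.boxProdLeft H a.2).append (q.boxProdRight G b.1)).copy (Prod.mk.eta) (Prod.mk.eta)
  have hw : w.length = G.dist a.1 b.1 + H.dist a.2 b.2 := by
    simp [w, Walk.boxProdLeft, Walk.boxProdRight, hp, hq]
    exact (Walk.length_append _ _).trans ((congrArg₂ (· + ·) (Walk.length_map _ p) (Walk.length_map _ q)).trans (by rw [hp, hq]))
  have hub : (G □ H).dist a b ≤ G.dist a.1 b.1 + H.dist a.2 b.2 :=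
    hw ▸ SimpleGraph.dist_le w
  refine le_antisymm hub ?_
  obtain ⟨r, hr⟩ := SimpleGraph.Reachable.exists_walk_length_eq_dist
    (⟨w⟩ : (G □ H).Reachable a b)
  have key := walk_lip _ (fun v : α × β => G.dist v.1 b.1 + H.dist v.2 b.2) ?_ r
  · simpa [hr, SimpleGraph.dist_self] using key
  · intro u v huv
    rw [SimpleGraph.boxProd_adj] at huv
    rcases huv with ⟨h1, h2⟩ | ⟨h1, h2⟩
    · have t := hG.dist_triangle (u := u.1) (v := v.1) (w := b.1)
      rw [SimpleGraph.dist_eq_one_iff_adj.mpr h1] at t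
      rw [h2]; omega
    · have t := hH.dist_triangle (u := u.2) (v := v.2) (w := b.2)
      rw [SimpleGraph.dist_eq_one_iff_adj.mpr h1] at t
      rw [h2]; omega

lemma gauss_real (m : ℕ) : ∑ i ∈ range m, (i : ℝ) = m * (m - 1) / 2 := by
  induction m with
  | zero => simp
  | succ m ih =>
    rw [Finset.sum_range_succ, ih]
    push_cast
    ring

lemma sum_dist_edge (m : ℕ) : ∑ i ∈ range m, (Nat.dist i m : ℝ) = m * (m + 1) / 2 := by
  have h : ∀ i ∈ range m, (Nat.dist i m : ℝ) = (m : ℝ) - (i : ℝ) := by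
    intro i hi
    rw [Finset.mem_range] at hi
    rw [Nat.dist_eq_sub_of_le (le_of_lt hi)]
    push_cast [le_of_lt hi]
    ring
  rw [Finset.sum_congr rfl h, Finset.sum_sub_distrib, Finset.sum_const, gauss_real]
  simp
  ring
lemma sum_sum_dist (m : ℕ) :
    ∑ i ∈ range m, ∑ j ∈ range m, (Nat.dist i j : ℝ) = ((m:ℝ)^3 - m) / 3 := by
  induction m with
  | zero => simp
  | succ m ih =>
    rw [Finset.sum_range_succ]
    have inner : ∀ i ∈ range m, ∑ j ∈ range (m+1), (Nat.dist i j : ℝ)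
        = (∑ j ∈ range m, (Nat.dist i j : ℝ)) + Nat.dist i m := by
      intro i _; rw [Finset.sum_range_succ]
    rw [Finset.sum_congr rfl inner, Finset.sum_add_distrib, ih, Finset.sum_range_succ]
    have hc : ∀ i ∈ range m, (Nat.dist m i : ℝ) = (Nat.dist i m : ℝ) := by
      intro i _; rw [Nat.dist_comm]
    rw [Finset.sum_congr rfl hc, sum_dist_edge, Nat.dist_self]
    push_cast
    ring

/-- Wiener index of the grid graph `G_{m,n} = P_m □ P_n`, `m, n ≥ 2`:
`W(G_{m,n}) = (1/6)(m³n² + m²n³ − m²n − mn²)`. -/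
theorem wiener_grid (m n : ℕ) (hm : 2 ≤ m) (hn : 2 ≤ n) :
    wiener (SimpleGraph.pathGraph m □ SimpleGraph.pathGraph n)
      = 1 / 6 * ((m : ℝ) ^ 3 * (n : ℝ) ^ 2 + (m : ℝ) ^ 2 * (n : ℝ) ^ 3
          - (m : ℝ) ^ 2 * (n : ℝ) - (m : ℝ) * (n : ℝ) ^ 2) := by
  have hGm : (SimpleGraph.pathGraph m).Connected := by
    have h : m - 1 + 1 = m := by omega
    rw [← h]; exact pathGraph_connected _
  have hGn : (SimpleGraph.pathGraph n).Connected := by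
    have h : n - 1 + 1 = n := by omega
    rw [← h]; exact pathGraph_connected _
  rw [wiener]
  have step1 : ∑ p ∈ (Finset.univ : Finset (Fin m × Fin n)).offDiag,
        ((SimpleGraph.pathGraph m □ SimpleGraph.pathGraph n).dist p.1 p.2 : ℝ)
      = ∑ p ∈ (Finset.univ : Finset (Fin m × Fin n)) ×ˢ Finset.univ,
        ((SimpleGraph.pathGraph m □ SimpleGraph.pathGraph n).dist p.1 p.2 : ℝ) := by
    apply Finset.sum_subset
    · intro x hx; simp [Finset.mem_offDiag] at hx ⊢
    · intro x _ hx
      simp [Finset.mem_offDiag] at hx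
      rw [hx, SimpleGraph.dist_self]
      simp
  rw [step1, Finset.sum_product]
  have step2 : ∀ u v : Fin m × Fin n,
      ((SimpleGraph.pathGraph m □ SimpleGraph.pathGraph n).dist u v : ℝ)
      = (Nat.dist u.1.val v.1.val : ℝ) + (Nat.dist u.2.val v.2.val : ℝ) := by
    intro u v
    rw [boxProd_dist _ _ hGm hGn, pathGraph_dist, pathGraph_dist]
    push_cast
    ring
  simp only [step2]
  have Am := sum_sum_dist m
  have An := sum_sum_dist n
  have hsum : ∑ u : Fin m × Fin n, ∑ v : Fin m × Fin n,
          ((Nat.dist u.1.val v.1.val : ℝ) + (Nat.dist u.2.val v.2.val : ℝ))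
      = (∑ i : Fin m, ∑ i' : Fin m, (Nat.dist i.val i'.val : ℝ)) * n^2
        + (∑ j : Fin n, ∑ j' : Fin n, (Nat.dist j.val j'.val : ℝ)) * m^2 := by
    simp only [Fintype.sum_prod_type, Finset.sum_add_distrib, Finset.sum_const,
      Finset.card_univ, Fintype.card_fin, nsmul_eq_mul, Finset.mul_sum, Finset.sum_mul]
    ring_nf
  rw [hsum]
  have e1 : (∑ i : Fin m, ∑ i' : Fin m, (Nat.dist i.val i'.val : ℝ)) = ((m:ℝ)^3 - m)/3 := by
    rw [Fin.sum_univ_eq_sum_range (fun i => ∑ i' : Fin m, (Nat.dist i i'.val : ℝ))]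
    rw [Finset.sum_congr rfl (fun i _ =>
      Fin.sum_univ_eq_sum_range (fun i' => (Nat.dist i i' : ℝ)) m)]
    exact sum_sum_dist m
  have e2 : (∑ j : Fin n, ∑ j' : Fin n, (Nat.dist j.val j'.val : ℝ)) = ((n:ℝ)^3 - n)/3 := by
    rw [Fin.sum_univ_eq_sum_range (fun j => ∑ j' : Fin n, (Nat.dist j j'.val : ℝ))]
    rw [Finset.sum_congr rfl (fun j _ =>
      Fin.sum_univ_eq_sum_range (fun j' => (Nat.dist j j' : ℝ)) n)]
    exact sum_sum_dist n
  rw [e1, e2]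
  ring
end

section
/- Let G_{m,n} = P_m □ P_n be the grid graph with m, n ≥ 2. Then the Steiner 3-Wiener index of G_{m,n} equals SW_3(G_{m,n}) = (1/12)(m⁴n³ + m³n⁴ − 3m³n² − 3m²n³ + 2m²n + 2mn²). -/
open Finset SimpleGraph Polynomial

namespace SteinerGrid

def nd (a b : ℕ) : ℕ := max a b - min a b

lemma nd_comm (a b : ℕ) : nd a b = nd b a := by unfold nd; omega

lemma med_sum (a b c : ℕ) :
    nd (min (max a b) (min (max a c) (max b c))) a
    + nd (min (max a b) (min (max a c) (max b c))) b
    + nd (min (max a b) (min (max a c) (max b c))) c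
    = max (max a b) c - min (min a b) c := by unfold nd; omega

lemma max3min3 (a b c : ℕ) : max (max a b) c - min (min a b) c
    = max (max (nd a b) (nd a c)) (nd b c) := by unfold nd; omega

lemma pathWalk_asc (m : ℕ) : ∀ (k : ℕ) (a c : Fin m), c.val = a.val + k →
    ∃ w : (pathGraph m).Walk a c, w.length = k := by
  intro k
  induction k with
  | zero =>
    intro a c h
    obtain rfl : a = c := Fin.ext (by omega)
    exact ⟨SimpleGraph.Walk.nil, rfl⟩
  | succ k ih =>
    intro a c h
    have ha' : a.val + 1 < m := by have := c.isLt; omega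
    set a' : Fin m := ⟨a.val + 1, ha'⟩ with ha'def
    have hadj : (pathGraph m).Adj a a' := by
      rw [pathGraph_adj]; left; rfl
    obtain ⟨w, hw⟩ := ih a' c (by simp [ha'def]; omega)
    exact ⟨SimpleGraph.Walk.cons hadj w, by simp [hw]⟩

lemma pathWalk (m : ℕ) (a c : Fin m) :
    ∃ w : (pathGraph m).Walk a c, w.length = nd a.val c.val := by
  rcases le_total a.val c.val with h | h
  · obtain ⟨w, hw⟩ := pathWalk_asc m (c.val - a.val) a c (by omega)
    exact ⟨w, by rw [hw]; unfold nd; omega⟩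
  · obtain ⟨w, hw⟩ := pathWalk_asc m (a.val - c.val) c a (by omega)
    exact ⟨w.reverse, by rw [SimpleGraph.Walk.length_reverse, hw]; unfold nd; omega⟩

lemma gridWalk (m n : ℕ) (u z : Fin m × Fin n) :
    ∃ w : (pathGraph m □ pathGraph n).Walk u z,
      w.length = nd u.1.val z.1.val + nd u.2.val z.2.val := by
  obtain ⟨w1, hw1⟩ := pathWalk m u.1 z.1
  obtain ⟨w2, hw2⟩ := pathWalk n u.2 z.2
  refine ⟨((w1.boxProdLeft (pathGraph n) u.2).append
    (SimpleGraph.Walk.boxProdRight (pathGraph m) z.1 w2)).copy (by simp) (by simp), ?_⟩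
  rw [SimpleGraph.Walk.length_copy, SimpleGraph.Walk.length_append]
  simp [SimpleGraph.Walk.boxProdLeft, SimpleGraph.Walk.boxProdRight,
    SimpleGraph.Walk.length_map, hw1, hw2]
  exact congrArg₂ (· + ·) ((SimpleGraph.Walk.length_map _ w1).trans hw1)
    ((SimpleGraph.Walk.length_map _ w2).trans hw2)

lemma ncard_toSubgraph_edgeSet_le {V : Type*} {G : SimpleGraph V} {u v : V} (p : G.Walk u v) :
    p.toSubgraph.edgeSet.ncard ≤ p.length := by
  classical
  have h1 : p.toSubgraph.edgeSet = ↑p.edges.toFinset := by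
    ext e; simp [SimpleGraph.Walk.edgeSet_toSubgraph]
  rw [h1, Set.ncard_coe_finset]
  calc p.edges.toFinset.card ≤ p.edges.length := List.toFinset_card_le _
    _ = p.length := SimpleGraph.Walk.length_edges p

lemma steiner_le_tripod {V : Type*} {G : SimpleGraph V} (u v w z : V)
    (wu : G.Walk z u) (wv : G.Walk z v) (ww : G.Walk z w) :
    steinerDist G {u, v, w} ≤ wu.length + wv.length + ww.length := by
  classical
  set H : G.Subgraph := (wu.toSubgraph ⊔ wv.toSubgraph) ⊔ ww.toSubgraph with hH
  have hconn : H.Connected := by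
    refine SimpleGraph.Subgraph.connected_sup (SimpleGraph.Subgraph.Connected.preconnected ?_) ww.toSubgraph_connected.preconnected ?_
    · exact SimpleGraph.Subgraph.connected_sup wu.toSubgraph_connected.preconnected wv.toSubgraph_connected.preconnected
        ⟨z, wu.start_mem_verts_toSubgraph, wv.start_mem_verts_toSubgraph⟩
    · exact ⟨z, Or.inl wu.start_mem_verts_toSubgraph, ww.start_mem_verts_toSubgraph⟩
  have hsub : ({u, v, w} : Set V) ⊆ H.verts := by
    intro x hx
    rcases hx with rfl | rfl | rfl
    · exact Or.inl (Or.inl wu.end_mem_verts_toSubgraph)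
    · exact Or.inl (Or.inr wv.end_mem_verts_toSubgraph)
    · exact Or.inr ww.end_mem_verts_toSubgraph
  have hcard : H.edgeSet.ncard ≤ wu.length + wv.length + ww.length := by
    have he : H.edgeSet = (wu.toSubgraph.edgeSet ∪ wv.toSubgraph.edgeSet) ∪
        ww.toSubgraph.edgeSet := by
      simp [hH, SimpleGraph.Subgraph.edgeSet_sup]
    rw [he]
    calc ((wu.toSubgraph.edgeSet ∪ wv.toSubgraph.edgeSet) ∪ ww.toSubgraph.edgeSet).ncard
        ≤ (wu.toSubgraph.edgeSet ∪ wv.toSubgraph.edgeSet).ncard + ww.toSubgraph.edgeSet.ncard :=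
          Set.ncard_union_le _ _
      _ ≤ (wu.toSubgraph.edgeSet.ncard + wv.toSubgraph.edgeSet.ncard)
            + ww.toSubgraph.edgeSet.ncard := by
          gcongr; exact Set.ncard_union_le _ _
      _ ≤ _ := by
          gcongr
          · exact ncard_toSubgraph_edgeSet_le wu
          · exact ncard_toSubgraph_edgeSet_le wv
          · exact ncard_toSubgraph_edgeSet_le ww
  calc steinerDist G {u, v, w} ≤ H.edgeSet.ncard :=
        Nat.sInf_le ⟨H, hconn, hsub, rfl⟩
    _ ≤ _ := hcard

lemma ivt {W : Type*} {G' : SimpleGraph W} (f : W → ℕ)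
    (hf : ∀ a b, G'.Adj a b → f a = f b ∨ f a + 1 = f b ∨ f b + 1 = f a)
    {u v : W} (w : G'.Walk u v) (k : ℕ) (h1 : f u ≤ k) (h2 : k < f v) :
    ∃ a b, G'.Adj a b ∧ f a = k ∧ f b = k + 1 := by
  induction w with
  | nil => omega
  | @cons x y z hadj p ih =>
    by_cases hy : f y ≤ k
    · exact ih hy h2
    · have := hf x y hadj
      exact ⟨x, y, hadj, by omega, by omega⟩

def gdiff {V : Type*} (g : V → ℕ) : Sym2 V → Prop :=
  Sym2.lift ⟨fun a b => g a ≠ g b, fun a b => by simp [ne_comm]⟩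

@[simp] lemma gdiff_mk {V : Type*} (g : V → ℕ) (a b : V) :
    gdiff g s(a, b) ↔ g a ≠ g b := Iff.rfl

lemma cut_count {V : Type*} [Fintype V] [DecidableEq V] {G : SimpleGraph V} (g : V → ℕ)
    (hstep : ∀ a b : V, G.Adj a b → g a = g b ∨ g a + 1 = g b ∨ g b + 1 = g a)
    (H : G.Subgraph) (hc : H.Connected) {u v : V} (hu : u ∈ H.verts) (hv : v ∈ H.verts) :
    nd (g u) (g v) ≤ {e ∈ H.edgeSet | gdiff g e}.ncard := by
  classical
  wlog hle : g u ≤ g v generalizing u v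
  · rw [nd_comm]; exact this hv hu (by omega)
  set P : ℕ → Sym2 V → Prop := fun k e =>
    e ∈ {e ∈ H.edgeSet | gdiff g e} ∧ ∃ a b : V, e = s(a, b) ∧ g a = k ∧ g b = k + 1 with hP
  have hex : ∀ k ∈ Finset.Ico (g u) (g v), ∃ e, P k e := by
    intro k hk
    rw [Finset.mem_Ico] at hk
    obtain ⟨w⟩ := hc ⟨u, hu⟩ ⟨v, hv⟩
    have hstep' : ∀ a b : H.verts, H.coe.Adj a b →
        g a.val = g b.val ∨ g a.val + 1 = g b.val ∨ g b.val + 1 = g a.val :=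
      fun a b hab => hstep a.val b.val (H.adj_sub hab)
    obtain ⟨a, b, hab, ha, hb⟩ := ivt (fun x : H.verts => g x.val) hstep' w k hk.1 hk.2
    have hHadj : H.Adj a.val b.val := hab
    exact ⟨s(a.val, b.val), ⟨Subgraph.mem_edgeSet.mpr hHadj, by simp [ha, hb]⟩,
      a.val, b.val, rfl, ha, hb⟩
  set F : ℕ → Sym2 V := fun k => if h : ∃ e, P k e then h.choose else s(u, u) with hF
  have hPF : ∀ k ∈ Finset.Ico (g u) (g v), P k (F k) := by
    intro k hk
    have h := hex k hk
    simp only [hF, dif_pos h]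
    exact h.choose_spec
  have hcard : (Finset.Ico (g u) (g v)).card ≤ {e ∈ H.edgeSet | gdiff g e}.toFinset.card := by
    apply Finset.card_le_card_of_injOn F
    · intro k hk
      rw [Finset.mem_coe, Set.mem_toFinset]
      exact (hPF k hk).1
    · intro k hk k' hk' heq
      obtain ⟨-, a, b, he, ha, hb⟩ := hPF k hk
      obtain ⟨-, a', b', he', ha', hb'⟩ := hPF k' hk'
      rw [heq, he'] at he
      rw [Sym2.eq_iff] at he
      rcases he with ⟨rfl, rfl⟩ | ⟨rfl, rfl⟩ <;> omega
  rw [Set.ncard_eq_toFinset_card']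
  calc nd (g u) (g v) = (Finset.Ico (g u) (g v)).card := by rw [Nat.card_Ico]; unfold nd; omega
    _ ≤ _ := hcard

lemma ncard_split {A : Type*} [Fintype A] (s : Set A) (p : A → Prop) :
    s.ncard = {e ∈ s | p e}.ncard + {e ∈ s | ¬ p e}.ncard := by
  classical
  rw [← Set.ncard_union_eq ?_ (Set.toFinite _) (Set.toFinite _)]
  · congr 1
    ext e
    simp only [Set.mem_union, Set.mem_setOf_eq]
    tauto
  · rw [Set.disjoint_iff_inter_eq_empty]
    ext e
    simp only [Set.mem_inter_iff, Set.mem_setOf_eq]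
    tauto

set_option maxHeartbeats 1000000 in
lemma steinerDist_triple (m n : ℕ) (u v w : Fin m × Fin n) :
    steinerDist (pathGraph m □ pathGraph n) {u, v, w} =
      (max (max u.1.val v.1.val) w.1.val - min (min u.1.val v.1.val) w.1.val)
      + (max (max u.2.val v.2.val) w.2.val - min (min u.2.val v.2.val) w.2.val) := by
  classical
  have hzxm : min (max u.1.val v.1.val) (min (max u.1.val w.1.val) (max v.1.val w.1.val)) < m := by
    have := u.1.isLt; have := v.1.isLt; have := w.1.isLt; omega
  have hzym : min (max u.2.val v.2.val) (min (max u.2.val w.2.val) (max v.2.val w.2.val)) < n := by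
    have := u.2.isLt; have := v.2.isLt; have := w.2.isLt; omega
  obtain ⟨wu, hwu⟩ := gridWalk m n (⟨_, hzxm⟩, ⟨_, hzym⟩) u
  obtain ⟨wv, hwv⟩ := gridWalk m n (⟨_, hzxm⟩, ⟨_, hzym⟩) v
  obtain ⟨ww', hww⟩ := gridWalk m n (⟨_, hzxm⟩, ⟨_, hzym⟩) w
  dsimp only at hwu hwv hww
  have A := med_sum u.1.val v.1.val w.1.val
  have B := med_sum u.2.val v.2.val w.2.val
  have hstep1 : ∀ p q : Fin m × Fin n, (pathGraph m □ pathGraph n).Adj p q →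
      p.1.val = q.1.val ∨ p.1.val + 1 = q.1.val ∨ q.1.val + 1 = p.1.val := by
    intro p q hpq
    rw [boxProd_adj] at hpq
    rcases hpq with ⟨h, -⟩ | ⟨-, h⟩
    · rw [pathGraph_adj] at h; omega
    · left; rw [h]
  have hstep2 : ∀ p q : Fin m × Fin n, (pathGraph m □ pathGraph n).Adj p q →
      p.2.val = q.2.val ∨ p.2.val + 1 = q.2.val ∨ q.2.val + 1 = p.2.val := by
    intro p q hpq
    rw [boxProd_adj] at hpq
    rcases hpq with ⟨-, h⟩ | ⟨h, -⟩
    · left; rw [h]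
    · rw [pathGraph_adj] at h; omega
  have hlb : ∀ N ∈ {N | ∃ H : (pathGraph m □ pathGraph n).Subgraph, H.Connected ∧
      ({u, v, w} : Set _) ⊆ H.verts ∧ H.edgeSet.ncard = N},
      (max (max u.1.val v.1.val) w.1.val - min (min u.1.val v.1.val) w.1.val)
      + (max (max u.2.val v.2.val) w.2.val - min (min u.2.val v.2.val) w.2.val) ≤ N := by
    rintro N ⟨H, hc, hsub, rfl⟩
    have hu' : u ∈ H.verts := hsub (by simp)
    have hv' : v ∈ H.verts := hsub (by simp)
    have hw' : w ∈ H.verts := hsub (by simp)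
    have h1 := cut_count (fun p : Fin m × Fin n => p.1.val) hstep1 H hc hu' hv'
    have h2 := cut_count (fun p : Fin m × Fin n => p.1.val) hstep1 H hc hu' hw'
    have h3 := cut_count (fun p : Fin m × Fin n => p.1.val) hstep1 H hc hv' hw'
    have h4 := cut_count (fun p : Fin m × Fin n => p.2.val) hstep2 H hc hu' hv'
    have h5 := cut_count (fun p : Fin m × Fin n => p.2.val) hstep2 H hc hu' hw'
    have h6 := cut_count (fun p : Fin m × Fin n => p.2.val) hstep2 H hc hv' hw'
    have hsplit : H.edgeSet.ncard =
        {e ∈ H.edgeSet | gdiff (fun p : Fin m × Fin n => p.1.val) e}.ncard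
        + {e ∈ H.edgeSet | ¬ gdiff (fun p : Fin m × Fin n => p.1.val) e}.ncard :=
      ncard_split _ _
    have hvert : {e ∈ H.edgeSet | gdiff (fun p : Fin m × Fin n => p.2.val) e} ⊆
        {e ∈ H.edgeSet | ¬ gdiff (fun p : Fin m × Fin n => p.1.val) e} := by
      rintro e ⟨heH, hed⟩
      refine ⟨heH, ?_⟩
      have heG : e ∈ (pathGraph m □ pathGraph n).edgeSet := H.edgeSet_subset heH
      induction e with
      | _ p q =>
        rw [SimpleGraph.mem_edgeSet, boxProd_adj] at heG
        rw [gdiff_mk] at hed ⊢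
        rcases heG with ⟨-, h⟩ | ⟨-, h⟩
        · exact absurd (congrArg Fin.val h) hed
        · simp [h]
    have hvert' : {e ∈ H.edgeSet | gdiff (fun p : Fin m × Fin n => p.2.val) e}.ncard ≤
        {e ∈ H.edgeSet | ¬ gdiff (fun p : Fin m × Fin n => p.1.val) e}.ncard :=
      Set.ncard_le_ncard hvert (Set.toFinite _)
    have hx : max (max (nd u.1.val v.1.val) (nd u.1.val w.1.val)) (nd v.1.val w.1.val)
        ≤ {e ∈ H.edgeSet | gdiff (fun p : Fin m × Fin n => p.1.val) e}.ncard :=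
      max_le (max_le h1 h2) h3
    have hy : max (max (nd u.2.val v.2.val) (nd u.2.val w.2.val)) (nd v.2.val w.2.val)
        ≤ {e ∈ H.edgeSet | gdiff (fun p : Fin m × Fin n => p.2.val) e}.ncard :=
      max_le (max_le h4 h5) h6
    rw [max3min3 u.1.val v.1.val w.1.val, max3min3 u.2.val v.2.val w.2.val]
    omega
  have hne : {N | ∃ H : (pathGraph m □ pathGraph n).Subgraph, H.Connected ∧
      ({u, v, w} : Set _) ⊆ H.verts ∧ H.edgeSet.ncard = N}.Nonempty := by
    refine ⟨_, (wu.toSubgraph ⊔ wv.toSubgraph) ⊔ ww'.toSubgraph, ?_, ?_, rfl⟩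
    · refine SimpleGraph.Subgraph.connected_sup (SimpleGraph.Subgraph.Connected.preconnected ?_) ww'.toSubgraph_connected.preconnected
        ⟨_, Or.inl wu.start_mem_verts_toSubgraph, ww'.start_mem_verts_toSubgraph⟩
      exact SimpleGraph.Subgraph.connected_sup wu.toSubgraph_connected.preconnected wv.toSubgraph_connected.preconnected
        ⟨_, wu.start_mem_verts_toSubgraph, wv.start_mem_verts_toSubgraph⟩
    · rintro x (rfl | rfl | rfl)
      · exact Or.inl (Or.inl wu.end_mem_verts_toSubgraph)
      · exact Or.inl (Or.inr wv.end_mem_verts_toSubgraph)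
      · exact Or.inr ww'.end_mem_verts_toSubgraph
  refine le_antisymm ?_ (le_csInf hne hlb)
  refine le_trans (steiner_le_tripod u v w _ wu wv ww') ?_
  rw [hwu, hwv, hww]
  omega
lemma range_card (M a3 i3 : ℕ) (h : i3 ≤ a3) (h2 : a3 < M) :
    a3 - i3 = ∑ k ∈ Finset.range (M - 1), (if i3 ≤ k ∧ k < a3 then 1 else 0) := by
  classical
  rw [← Finset.card_filter]
  have : Finset.filter (fun k => i3 ≤ k ∧ k < a3) (Finset.range (M - 1)) = Finset.Ico i3 a3 := by
    ext k
    simp only [Finset.mem_filter, Finset.mem_range, Finset.mem_Ico]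
    omega
  rw [this, Nat.card_Ico]

lemma steiner_as_cuts (m n : ℕ) (S : Finset (Fin m × Fin n)) (hS : S.card = 3) :
    steinerDist (pathGraph m □ pathGraph n) ↑S =
      (∑ k ∈ Finset.range (m - 1),
        if (∃ p ∈ S, p.1.val ≤ k) ∧ (∃ p ∈ S, k < p.1.val) then 1 else 0)
      + (∑ l ∈ Finset.range (n - 1),
        if (∃ p ∈ S, p.2.val ≤ l) ∧ (∃ p ∈ S, l < p.2.val) then 1 else 0) := by
  classical
  obtain ⟨u, v, w, -, -, -, rfl⟩ := Finset.card_eq_three.mp hS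
  have hcoe : (↑({u, v, w} : Finset (Fin m × Fin n)) : Set (Fin m × Fin n))
      = {u, v, w} := by simp
  rw [hcoe, steinerDist_triple]
  have c1 : ∀ k : ℕ, ((∃ p ∈ ({u, v, w} : Finset (Fin m × Fin n)), p.1.val ≤ k)
      ∧ (∃ p ∈ ({u, v, w} : Finset (Fin m × Fin n)), k < p.1.val))
      ↔ (min (min u.1.val v.1.val) w.1.val ≤ k ∧ k < max (max u.1.val v.1.val) w.1.val) := by
    intro k
    simp only [Finset.mem_insert, Finset.mem_singleton, exists_eq_or_imp, exists_eq_left]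
    omega
  have c2 : ∀ l : ℕ, ((∃ p ∈ ({u, v, w} : Finset (Fin m × Fin n)), p.2.val ≤ l)
      ∧ (∃ p ∈ ({u, v, w} : Finset (Fin m × Fin n)), l < p.2.val))
      ↔ (min (min u.2.val v.2.val) w.2.val ≤ l ∧ l < max (max u.2.val v.2.val) w.2.val) := by
    intro l
    simp only [Finset.mem_insert, Finset.mem_singleton, exists_eq_or_imp, exists_eq_left]
    omega
  simp only [c1, c2]
  congr 1
  · exact range_card m _ _ (by omega) (by have := u.1.isLt; have := v.1.isLt; have := w.1.isLt; omega)
  · exact range_card n _ _ (by omega) (by have := u.2.isLt; have := v.2.isLt; have := w.2.isLt; omega)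
lemma card_left_strip (m n k : ℕ) (hk : k < m) :
    ((univ : Finset (Fin m × Fin n)).filter (fun p => p.1.val ≤ k)).card = (k + 1) * n := by
  classical
  have h1 : ((univ : Finset (Fin m × Fin n)).filter (fun p => p.1.val ≤ k))
      = ((univ : Finset (Fin m)).filter (fun i => i.val ≤ k)) ×ˢ (univ : Finset (Fin n)) := by
    ext p
    simp [Finset.mem_product]
  have h2 : ((univ : Finset (Fin m)).filter (fun i => i.val ≤ k)) = Finset.Iic ⟨k, hk⟩ := by
    ext i
    simp [Fin.le_def]
  rw [h1, Finset.card_product, h2, Fin.card_Iic]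
  simp

lemma card_right_strip (m n k : ℕ) (hk : k < m) :
    ((univ : Finset (Fin m × Fin n)).filter (fun p => k < p.1.val)).card = (m - 1 - k) * n := by
  classical
  have h0 := Finset.card_filter_add_card_filter_not
    (s := (univ : Finset (Fin m × Fin n))) (p := fun p => p.1.val ≤ k)
  have h1 := card_left_strip m n k hk
  have h2 : ((univ : Finset (Fin m × Fin n)).filter (fun p => ¬ p.1.val ≤ k))
      = ((univ : Finset (Fin m × Fin n)).filter (fun p => k < p.1.val)) := by
    apply Finset.filter_congr
    intro p _
    simp only [not_le]
  have h3 : (univ : Finset (Fin m × Fin n)).card = m * n := by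
    simp
  rw [h2] at h0
  have : (m - 1 - k) * n = m * n - (k + 1) * n := by
    have : m - 1 - k = m - (k+1) := by omega
    rw [this, Nat.sub_mul]
  omega

lemma filter_all_eq_powersetCard (m n : ℕ) (q : Fin m × Fin n → Prop) [DecidablePred q] :
    ((powersetCard 3 (univ : Finset (Fin m × Fin n))).filter (fun S => ∀ p ∈ S, q p))
      = powersetCard 3 ((univ : Finset (Fin m × Fin n)).filter q) := by
  ext S
  simp only [Finset.mem_filter, Finset.mem_powersetCard]
  constructor
  · rintro ⟨⟨-, h3⟩, hall⟩
    exact ⟨fun x hx => Finset.mem_filter.mpr ⟨Finset.mem_univ x, hall x hx⟩, h3⟩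
  · rintro ⟨hsub, h3⟩
    exact ⟨⟨Finset.subset_univ S, h3⟩, fun p hp => (Finset.mem_filter.mp (hsub hp)).2⟩

lemma cross_count (m n k : ℕ) (hk : k < m - 1) :
    ((powersetCard 3 (univ : Finset (Fin m × Fin n))).filter
      (fun S => (∃ p ∈ S, p.1.val ≤ k) ∧ (∃ p ∈ S, k < p.1.val))).card
    + ((k + 1) * n).choose 3 + ((m - 1 - k) * n).choose 3 = (m * n).choose 3 := by
  classical
  set P3 := powersetCard 3 (univ : Finset (Fin m × Fin n)) with hP3
  have htot : P3.card = (m * n).choose 3 := by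
    rw [hP3, Finset.card_powersetCard]
    simp
  have hkm : k < m := by omega
  have hA : (P3.filter (fun S => ∀ p ∈ S, p.1.val ≤ k)).card = ((k + 1) * n).choose 3 := by
    rw [hP3, filter_all_eq_powersetCard, Finset.card_powersetCard, card_left_strip m n k hkm]
  have hB : (P3.filter (fun S => ∀ p ∈ S, k < p.1.val)).card = ((m - 1 - k) * n).choose 3 := by
    rw [hP3, filter_all_eq_powersetCard, Finset.card_powersetCard, card_right_strip m n k hkm]
  have hsplit1 := Finset.card_filter_add_card_filter_not
    (s := P3) (p := fun S => ∀ p ∈ S, p.1.val ≤ k)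
  have hsplit2 := Finset.card_filter_add_card_filter_not
    (s := P3.filter (fun S => ¬ ∀ p ∈ S, p.1.val ≤ k)) (p := fun S => ∀ p ∈ S, k < p.1.val)
  rw [Finset.filter_filter, Finset.filter_filter] at hsplit2
  have hne : ∀ S ∈ P3, S.Nonempty := by
    intro S hS
    rw [hP3, Finset.mem_powersetCard] at hS
    rw [← Finset.card_pos, hS.2]
    norm_num
  have he1 : P3.filter (fun S => (¬ ∀ p ∈ S, p.1.val ≤ k) ∧ ∀ p ∈ S, k < p.1.val)
      = P3.filter (fun S => ∀ p ∈ S, k < p.1.val) := by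
    apply Finset.filter_congr
    intro S hS
    obtain ⟨p0, hp0⟩ := hne S hS
    constructor
    · tauto
    · intro h
      exact ⟨fun hall => absurd (hall p0 hp0) (by have := h p0 hp0; omega), h⟩
  have he2 : P3.filter (fun S => (¬ ∀ p ∈ S, p.1.val ≤ k) ∧ ¬ ∀ p ∈ S, k < p.1.val)
      = P3.filter (fun S => (∃ p ∈ S, p.1.val ≤ k) ∧ (∃ p ∈ S, k < p.1.val)) := by
    apply Finset.filter_congr
    intro S _
    push_neg
    constructor
    · rintro ⟨⟨p1, hp1, h1⟩, p2, hp2, h2⟩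
      exact ⟨⟨p2, hp2, by omega⟩, ⟨p1, hp1, by omega⟩⟩
    · rintro ⟨⟨p1, hp1, h1⟩, p2, hp2, h2⟩
      exact ⟨⟨p2, hp2, by omega⟩, ⟨p1, hp1, by omega⟩⟩
  rw [he1, he2] at hsplit2
  omega

lemma card_left_strip_y (m n l : ℕ) (hl : l < n) :
    ((univ : Finset (Fin m × Fin n)).filter (fun p => p.2.val ≤ l)).card = (l + 1) * m := by
  classical
  have h1 : ((univ : Finset (Fin m × Fin n)).filter (fun p => p.2.val ≤ l))
      = (univ : Finset (Fin m)) ×ˢ ((univ : Finset (Fin n)).filter (fun i => i.val ≤ l)) := by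
    ext p
    simp [Finset.mem_product]
  have h2 : ((univ : Finset (Fin n)).filter (fun i => i.val ≤ l)) = Finset.Iic ⟨l, hl⟩ := by
    ext i
    simp [Fin.le_def]
  rw [h1, Finset.card_product, h2, Fin.card_Iic]
  simp [Nat.mul_comm]

lemma card_right_strip_y (m n l : ℕ) (hl : l < n) :
    ((univ : Finset (Fin m × Fin n)).filter (fun p => l < p.2.val)).card = (n - 1 - l) * m := by
  classical
  have h0 := Finset.card_filter_add_card_filter_not
    (s := (univ : Finset (Fin m × Fin n))) (p := fun p => p.2.val ≤ l)
  have h1 := card_left_strip_y m n l hl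
  have h2 : ((univ : Finset (Fin m × Fin n)).filter (fun p => ¬ p.2.val ≤ l))
      = ((univ : Finset (Fin m × Fin n)).filter (fun p => l < p.2.val)) := by
    apply Finset.filter_congr
    intro p _
    simp only [not_le]
  have h3 : (univ : Finset (Fin m × Fin n)).card = m * n := by
    simp
  rw [h2] at h0
  have h4 : (n - 1 - l) * m = m * n - (l + 1) * m := by
    have h5 : (n - 1 - l) * m = (n - (l + 1)) * m := by
      congr 1
      omega
    rw [h5, Nat.sub_mul]
    ring_nf
  omega

lemma filter_all_eq_powersetCard' (m n : ℕ) (q : Fin m × Fin n → Prop) [DecidablePred q] :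
    ((powersetCard 3 (univ : Finset (Fin m × Fin n))).filter (fun S => ∀ p ∈ S, q p))
      = powersetCard 3 ((univ : Finset (Fin m × Fin n)).filter q) := by
  ext S
  simp only [Finset.mem_filter, Finset.mem_powersetCard]
  constructor
  · rintro ⟨⟨-, h3⟩, hall⟩
    exact ⟨fun x hx => Finset.mem_filter.mpr ⟨Finset.mem_univ x, hall x hx⟩, h3⟩
  · rintro ⟨hsub, h3⟩
    exact ⟨⟨Finset.subset_univ S, h3⟩, fun p hp => (Finset.mem_filter.mp (hsub hp)).2⟩

lemma cross_count_y (m n l : ℕ) (hl : l < n - 1) :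
    ((powersetCard 3 (univ : Finset (Fin m × Fin n))).filter
      (fun S => (∃ p ∈ S, p.2.val ≤ l) ∧ (∃ p ∈ S, l < p.2.val))).card
    + ((l + 1) * m).choose 3 + ((n - 1 - l) * m).choose 3 = (m * n).choose 3 := by
  classical
  set P3 := powersetCard 3 (univ : Finset (Fin m × Fin n)) with hP3
  have htot : P3.card = (m * n).choose 3 := by
    rw [hP3, Finset.card_powersetCard]
    simp
  have hln : l < n := by omega
  have hA : (P3.filter (fun S => ∀ p ∈ S, p.2.val ≤ l)).card = ((l + 1) * m).choose 3 := by
    rw [hP3, filter_all_eq_powersetCard', Finset.card_powersetCard, card_left_strip_y m n l hln]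
  have hB : (P3.filter (fun S => ∀ p ∈ S, l < p.2.val)).card = ((n - 1 - l) * m).choose 3 := by
    rw [hP3, filter_all_eq_powersetCard', Finset.card_powersetCard, card_right_strip_y m n l hln]
  have hsplit1 := Finset.card_filter_add_card_filter_not
    (s := P3) (p := fun S => ∀ p ∈ S, p.2.val ≤ l)
  have hsplit2 := Finset.card_filter_add_card_filter_not
    (s := P3.filter (fun S => ¬ ∀ p ∈ S, p.2.val ≤ l)) (p := fun S => ∀ p ∈ S, l < p.2.val)
  rw [Finset.filter_filter, Finset.filter_filter] at hsplit2
  have hne : ∀ S ∈ P3, S.Nonempty := by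
    intro S hS
    rw [hP3, Finset.mem_powersetCard] at hS
    rw [← Finset.card_pos, hS.2]
    norm_num
  have he1 : P3.filter (fun S => (¬ ∀ p ∈ S, p.2.val ≤ l) ∧ ∀ p ∈ S, l < p.2.val)
      = P3.filter (fun S => ∀ p ∈ S, l < p.2.val) := by
    apply Finset.filter_congr
    intro S hS
    obtain ⟨p0, hp0⟩ := hne S hS
    constructor
    · tauto
    · intro h
      exact ⟨fun hall => absurd (hall p0 hp0) (by have := h p0 hp0; omega), h⟩
  have he2 : P3.filter (fun S => (¬ ∀ p ∈ S, p.2.val ≤ l) ∧ ¬ ∀ p ∈ S, l < p.2.val)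
      = P3.filter (fun S => (∃ p ∈ S, p.2.val ≤ l) ∧ (∃ p ∈ S, l < p.2.val)) := by
    apply Finset.filter_congr
    intro S _
    push_neg
    constructor
    · rintro ⟨⟨p1, hp1, h1⟩, p2, hp2, h2⟩
      exact ⟨⟨p2, hp2, by omega⟩, ⟨p1, hp1, by omega⟩⟩
    · rintro ⟨⟨p1, hp1, h1⟩, p2, hp2, h2⟩
      exact ⟨⟨p2, hp2, by omega⟩, ⟨p1, hp1, by omega⟩⟩
  rw [he1, he2] at hsplit2
  omega

lemma two_choose2 (b : ℕ) : 2 * ((b + 1).choose 2) = (b + 1) * b := by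
  induction b with
  | zero => rfl
  | succ b ih =>
    rw [show b + 1 + 1 = (b + 1) + 1 from rfl, Nat.choose_succ_succ' (b + 1) 1,
      Nat.mul_add, ih, Nat.choose_one_right]
    ring

lemma six_choose3 (b : ℕ) : 6 * ((b + 2).choose 3) = (b + 2) * (b + 1) * b := by
  induction b with
  | zero => rfl
  | succ b ih =>
    rw [show b + 1 + 2 = (b + 2) + 1 from rfl, Nat.choose_succ_succ' (b + 2) 2,
      Nat.mul_add, ih]
    have h2 : 6 * ((b + 2).choose 2) = 3 * ((b + 2) * (b + 1)) := by
      have h := two_choose2 (b + 1)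
      simp only [show b + 1 + 1 = b + 2 from rfl] at h
      omega
    rw [h2]
    ring

lemma cast_choose3 (a : ℕ) : ((a.choose 3 : ℕ) : ℝ) = a * ((a : ℝ) - 1) * ((a : ℝ) - 2) / 6 := by
  match a with
  | 0 => norm_num
  | 1 => norm_num [show Nat.choose 1 3 = 0 from rfl]
  | (b + 2) =>
    have h := six_choose3 b
    have h' : (6 : ℝ) * ((b + 2).choose 3 : ℕ) = ((b : ℝ) + 2) * ((b : ℝ) + 1) * b := by
      exact_mod_cast congrArg (fun x : ℕ => (x : ℝ)) h
    push_cast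
    push_cast at h'
    linarith

lemma s1 (M : ℕ) : ∑ j ∈ range M, (j : ℝ) = M * ((M : ℝ) - 1) / 2 := by
  induction M with
  | zero => simp
  | succ M ih => rw [Finset.sum_range_succ, ih]; push_cast; ring

lemma s2 (M : ℕ) : ∑ j ∈ range M, (j : ℝ) ^ 2 = M * ((M : ℝ) - 1) * (2 * M - 1) / 6 := by
  induction M with
  | zero => simp
  | succ M ih => rw [Finset.sum_range_succ, ih]; push_cast; ring

lemma s3 (M : ℕ) : ∑ j ∈ range M, (j : ℝ) ^ 3 = (M * ((M : ℝ) - 1)) ^ 2 / 4 := by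
  induction M with
  | zero => simp
  | succ M ih => rw [Finset.sum_range_succ, ih]; push_cast; ring

lemma sum_choose3 (M N : ℕ) : ∑ j ∈ range M, (((j * N).choose 3 : ℕ) : ℝ)
    = ((N : ℝ) ^ 3 * ((M * ((M : ℝ) - 1)) ^ 2 / 4)
      - 3 * (N : ℝ) ^ 2 * (M * ((M : ℝ) - 1) * (2 * M - 1) / 6)
      + 2 * (N : ℝ) * (M * ((M : ℝ) - 1) / 2)) / 6 := by
  have h : ∀ j ∈ range M, (((j * N).choose 3 : ℕ) : ℝ)
      = ((N : ℝ) ^ 3 * (j : ℝ) ^ 3 - 3 * (N : ℝ) ^ 2 * (j : ℝ) ^ 2 + 2 * (N : ℝ) * j) / 6 := by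
    intro j _
    rw [cast_choose3]
    push_cast
    ring
  rw [Finset.sum_congr rfl h]
  rw [← Finset.sum_div]
  have expand : ∑ j ∈ range M, ((N : ℝ) ^ 3 * (j : ℝ) ^ 3 - 3 * (N : ℝ) ^ 2 * (j : ℝ) ^ 2
      + 2 * (N : ℝ) * (j : ℝ))
      = (N : ℝ) ^ 3 * (∑ j ∈ range M, (j : ℝ) ^ 3)
        - 3 * (N : ℝ) ^ 2 * (∑ j ∈ range M, (j : ℝ) ^ 2)
        + 2 * (N : ℝ) * (∑ j ∈ range M, (j : ℝ)) := by
    simp [Finset.mul_sum, Finset.sum_add_distrib, Finset.sum_sub_distrib]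
  rw [expand, s1, s2, s3]

lemma sum_shift_choose3 (m N : ℕ) (hm : 1 ≤ m) :
    ∑ k ∈ range (m - 1), ((((k + 1) * N).choose 3 : ℕ) : ℝ)
      = ∑ j ∈ range m, (((j * N).choose 3 : ℕ) : ℝ) := by
  have h : m = (m - 1) + 1 := by omega
  rw [h, Finset.sum_range_succ']
  simp

lemma SW3_real (m n : ℕ) (hm : 2 ≤ m) (hn : 2 ≤ n) :
    (SW 3 (pathGraph m □ pathGraph n) : ℝ)
      = (∑ k ∈ Finset.range (m - 1), (((m * n).choose 3 : ℝ)
          - (((k + 1) * n).choose 3 : ℕ) - (((m - 1 - k) * n).choose 3 : ℕ)))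
        + (∑ l ∈ Finset.range (n - 1), (((m * n).choose 3 : ℝ)
          - (((l + 1) * m).choose 3 : ℕ) - (((n - 1 - l) * m).choose 3 : ℕ))) := by
  classical
  have hnat : SW 3 (pathGraph m □ pathGraph n)
      = (∑ k ∈ Finset.range (m - 1),
          ((powersetCard 3 (univ : Finset (Fin m × Fin n))).filter
            (fun S => (∃ p ∈ S, p.1.val ≤ k) ∧ (∃ p ∈ S, k < p.1.val))).card)
        + (∑ l ∈ Finset.range (n - 1),
          ((powersetCard 3 (univ : Finset (Fin m × Fin n))).filter
            (fun S => (∃ p ∈ S, p.2.val ≤ l) ∧ (∃ p ∈ S, l < p.2.val))).card) := by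
    rw [SW]
    rw [Finset.sum_congr rfl (fun S hS => steiner_as_cuts m n S
      ((Finset.mem_powersetCard.mp hS).2))]
    rw [Finset.sum_add_distrib]
    congr 1
    · rw [Finset.sum_comm]
      refine Finset.sum_congr rfl fun k _ => ?_
      rw [Finset.card_filter]
    · rw [Finset.sum_comm]
      refine Finset.sum_congr rfl fun l _ => ?_
      rw [Finset.card_filter]
  rw [hnat]
  push_cast
  have e1 : ∀ k ∈ Finset.range (m - 1),
      ((((powersetCard 3 (univ : Finset (Fin m × Fin n))).filter
        (fun S => (∃ p ∈ S, p.1.val ≤ k) ∧ (∃ p ∈ S, k < p.1.val))).card : ℝ))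
      = ((m * n).choose 3 : ℕ) - (((k + 1) * n).choose 3 : ℕ)
        - (((m - 1 - k) * n).choose 3 : ℕ) := by
    intro k hk
    have h := cross_count m n k (Finset.mem_range.mp hk)
    have h' : ((((powersetCard 3 (univ : Finset (Fin m × Fin n))).filter
      (fun S => (∃ p ∈ S, p.1.val ≤ k) ∧ (∃ p ∈ S, k < p.1.val))).card : ℝ))
      + (((k + 1) * n).choose 3 : ℕ) + (((m - 1 - k) * n).choose 3 : ℕ)
      = ((m * n).choose 3 : ℕ) := by exact_mod_cast congrArg (fun x : ℕ => (x : ℝ)) h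
    linarith
  have e2 : ∀ l ∈ Finset.range (n - 1),
      ((((powersetCard 3 (univ : Finset (Fin m × Fin n))).filter
        (fun S => (∃ p ∈ S, p.2.val ≤ l) ∧ (∃ p ∈ S, l < p.2.val))).card : ℝ))
      = ((m * n).choose 3 : ℕ) - (((l + 1) * m).choose 3 : ℕ)
        - (((n - 1 - l) * m).choose 3 : ℕ) := by
    intro l hl
    have h := cross_count_y m n l (Finset.mem_range.mp hl)
    have h' : ((((powersetCard 3 (univ : Finset (Fin m × Fin n))).filter
      (fun S => (∃ p ∈ S, p.2.val ≤ l) ∧ (∃ p ∈ S, l < p.2.val))).card : ℝ))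
      + (((l + 1) * m).choose 3 : ℕ) + (((n - 1 - l) * m).choose 3 : ℕ)
      = ((m * n).choose 3 : ℕ) := by exact_mod_cast congrArg (fun x : ℕ => (x : ℝ)) h
    linarith
  rw [Finset.sum_congr rfl e1, Finset.sum_congr rfl e2]
lemma sum_block (m n : ℕ) (C : ℝ) (hm : 2 ≤ m) :
    (∑ k ∈ Finset.range (m - 1), (C
          - (((k + 1) * n).choose 3 : ℕ) - (((m - 1 - k) * n).choose 3 : ℕ)))
      = ((m : ℝ) - 1) * C
        - 2 * ∑ j ∈ range m, (((j * n).choose 3 : ℕ) : ℝ) := by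
  have hrefl : ∑ k ∈ Finset.range (m - 1), ((((m - 1 - k) * n).choose 3 : ℕ) : ℝ)
      = ∑ k ∈ Finset.range (m - 1), ((((k + 1) * n).choose 3 : ℕ) : ℝ) := by
    have h1 : ∀ k ∈ Finset.range (m - 1), ((((m - 1 - k) * n).choose 3 : ℕ) : ℝ)
        = (fun j => ((((j + 1) * n).choose 3 : ℕ) : ℝ)) ((m - 1) - 1 - k) := by
      intro k hk
      rw [Finset.mem_range] at hk
      have : (m - 1 - k) = ((m - 1) - 1 - k) + 1 := by omega
      rw [this]
    rw [Finset.sum_congr rfl h1]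
    exact Finset.sum_range_reflect (fun j => ((((j + 1) * n).choose 3 : ℕ) : ℝ)) (m - 1)
  rw [Finset.sum_sub_distrib, Finset.sum_sub_distrib, hrefl, Finset.sum_const,
    Finset.card_range, nsmul_eq_mul, sum_shift_choose3 m n (by omega),
    Nat.cast_sub (by omega : 1 ≤ m)]
  push_cast
  ring


end SteinerGrid

/-- Steiner 3-Wiener index of the grid graph `G_{m,n} = P_m □ P_n`, `m, n ≥ 2`:
`SW₃(G_{m,n}) = (1/12)(m⁴n³ + m³n⁴ − 3m³n² − 3m²n³ + 2m²n + 2mn²)`. -/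
theorem steiner_three_wiener_grid (m n : ℕ) (hm : 2 ≤ m) (hn : 2 ≤ n) :
    (SW 3 (SimpleGraph.pathGraph m □ SimpleGraph.pathGraph n) : ℝ)
      = 1 / 12 * ((m : ℝ) ^ 4 * (n : ℝ) ^ 3 + (m : ℝ) ^ 3 * (n : ℝ) ^ 4
          - 3 * (m : ℝ) ^ 3 * (n : ℝ) ^ 2 - 3 * (m : ℝ) ^ 2 * (n : ℝ) ^ 3
          + 2 * (m : ℝ) ^ 2 * (n : ℝ) + 2 * (m : ℝ) * (n : ℝ) ^ 2) := by
  rw [SteinerGrid.SW3_real m n hm hn, SteinerGrid.sum_block m n _ hm,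
    SteinerGrid.sum_block n m _ hn, SteinerGrid.sum_choose3 m n, SteinerGrid.sum_choose3 n m,
    SteinerGrid.cast_choose3 (m * n)]
  have h1 : ((m * n : ℕ) : ℝ) = (m : ℝ) * n := by push_cast; ring
  rw [h1]
  have hmn : ((n * m : ℕ) : ℝ) = (m : ℝ) * n := by push_cast; ring
  ring
end
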